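/- arXiv:2305.07098 — 2 statements merged into one kernel-verified Lean document; each statement's English description precedes it below -/
import Mathlib

section
/- Let c ∈ (0, 1/2) and let w ∈ ℤ with −n ≤ w ≤ −1. Suppose the time-linkage RLS or (1+1) EA on f_w, without having reached the global optimum, arrives for the first time at a state in which the number of zero-bits of the current solution is below n^c, and that this state (x',x) satisfies x'_1 = 0 and x_1 = 1. Then with probability at least 1 − e/n^{2−c} − 1/n^{1−2c} − (n−1)·e^{−n^c/e}, Event I or Event II occurs at some (possibly later) time of the run. -/
open scoped Classical BigOperators ENNReal

noncomputable section

/-- Bitstrings of length `n`. -/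
abbrev BitStr (n : ℕ) := Fin n → Bool

/-- The number of one-bits of a bitstring. -/
def ones {n : ℕ} (x : BitStr n) : ℕ := (Finset.univ.filter fun i => x i = true).card

/-- The number of zero-bits of a bitstring. -/
def zeros {n : ℕ} (x : BitStr n) : ℕ := (Finset.univ.filter fun i => x i = false).card

/-- The first bit of a bitstring (`false` if `n = 0`). -/
def firstBit {n : ℕ} (x : BitStr n) : Bool := if h : 0 < n then x ⟨0, h⟩ else false

/-- The number of one-bits among the last `n-1` positions. -/
def onesTail {n : ℕ} (x : BitStr n) : ℕ :=
  (Finset.univ.filter fun i : Fin n => x i = true ∧ (i : ℕ) ≠ 0).card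

/-- The all-ones bitstring `1^n`. -/
def allOnes (n : ℕ) : BitStr n := fun _ => true

/-- The time-linkage OneMax function `f_w(x, y) = |y| + w·x₁`, where `x` is the
previous solution and `y` is the current one. -/
def fW {n : ℕ} (w : ℤ) (x y : BitStr n) : ℤ :=
  (ones y : ℤ) + (if firstBit x then w else 0)

/-- States of the time-linkage algorithms: (previous solution, current solution). -/
abbrev TLState (n : ℕ) := BitStr n × BitStr n

/-- Hamming distance between two bitstrings. -/
def hamming {n : ℕ} (x y : BitStr n) : ℕ := (Finset.univ.filter fun i => x i ≠ y i).card

/-- Standard bit-wise mutation, flipping each bit independently with probability `1/n`: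
`mutEA x y` is the probability that mutating `x` yields `y`. -/
def mutEA {n : ℕ} (x y : BitStr n) : ℝ :=
  (1 / n : ℝ) ^ hamming x y * (1 - 1 / n) ^ (n - hamming x y)

/-- RLS mutation, flipping exactly one bit chosen uniformly at random:
`mutRLS x y` is the probability that mutating `x` yields `y`. -/
def mutRLS {n : ℕ} (x y : BitStr n) : ℝ :=
  if hamming x y = 1 then (1 / n : ℝ) else 0

/-- Transition matrix of the time-linkage (1+1)-type algorithm with mutation
distribution `m` on `f_w`: at state `(x', x)`, an offspring `y` sampled from
`m x ·` is accepted (the state moving to `(x, y)`) iff `f_w(x, y) ≥ f_w(x', x)`;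
otherwise the state stays at `(x', x)`. -/
def tlTrans {n : ℕ} (m : BitStr n → BitStr n → ℝ) (w : ℤ) (s t : TLState n) : ℝ :=
  (∑ y : BitStr n, if fW w s.1 s.2 ≤ fW w s.2 y ∧ t = (s.2, y) then m s.2 y else 0) +
    if t = s then ∑ y : BitStr n, if ¬ fW w s.1 s.2 ≤ fW w s.2 y then m s.2 y else 0 else 0

/-- Transition matrix of the time-linkage (1+1) EA on `f_w`. -/
def transEA {n : ℕ} (w : ℤ) : TLState n → TLState n → ℝ := tlTrans mutEA w

/-- Transition matrix of the time-linkage RLS on `f_w`. -/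
def transRLS {n : ℕ} (w : ℤ) : TLState n → TLState n → ℝ := tlTrans mutRLS w

/-- Probability that the chain with transition matrix `P` started at `s`
visits a state in `E` within the first `T` steps (including time 0). -/
def hitWithin {n : ℕ} (P : TLState n → TLState n → ℝ) (E : TLState n → Prop) :
    ℕ → TLState n → ℝ
  | 0, s => if E s then 1 else 0
  | T + 1, s => if E s then 1 else ∑ t : TLState n, P s t * hitWithin P E T t

/-- Probability that the chain started at `s` ever visits a state in `E`. -/
def hitProb {n : ℕ} (P : TLState n → TLState n → ℝ) (E : TLState n → Prop)
    (s : TLState n) : ℝ := ⨆ T : ℕ, hitWithin P E T s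

/-- Probability that the chain started at `s` visits a state in `E` at some
time `≥ 1` (i.e. at a strictly later time). -/
def hitProbLater {n : ℕ} (P : TLState n → TLState n → ℝ) (E : TLState n → Prop)
    (s : TLState n) : ℝ := ⨆ T : ℕ, ∑ t : TLState n, P s t * hitWithin P E T t

/-- Probability that the chain started at `s` visits `A` within `T` steps
without having visited `B` strictly before (`A` has priority on common states). -/
def raceWithin {n : ℕ} (P : TLState n → TLState n → ℝ) (A B : TLState n → Prop) :
    ℕ → TLState n → ℝ
  | 0, s => if A s then 1 else 0
  | T + 1, s =>
      if A s then 1 else if B s then 0 else ∑ t : TLState n, P s t * raceWithin P A B T t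

/-- Probability that the chain started at `s` eventually visits `A` before `B`,
i.e. reaches `A` without having visited `B` strictly before. -/
def raceProb {n : ℕ} (P : TLState n → TLState n → ℝ) (A B : TLState n → Prop)
    (s : TLState n) : ℝ := ⨆ T : ℕ, raceWithin P A B T s

/-- Probability that the chain started at `s` enters the set `A` within `T`
steps and at the first entrance time is in `E`. -/
def firstHitInWithin {n : ℕ} (P : TLState n → TLState n → ℝ) (A E : TLState n → Prop) :
    ℕ → TLState n → ℝ
  | 0, s => if A s then (if E s then 1 else 0) else 0
  | T + 1, s =>
      if A s then (if E s then 1 else 0)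
      else ∑ t : TLState n, P s t * firstHitInWithin P A E T t

/-- Probability that the chain started at `s` eventually enters the set `A`
and at the first entrance time is in `E`. -/
def firstHitInProb {n : ℕ} (P : TLState n → TLState n → ℝ) (A E : TLState n → Prop)
    (s : TLState n) : ℝ := ⨆ T : ℕ, firstHitInWithin P A E T s

/-- Expected hitting time of `E` for the chain started at `s` (in `ℝ≥0∞`),
via `E[τ] = ∑_{T ≥ 0} P[τ > T]`. -/
def expHitTime {n : ℕ} (P : TLState n → TLState n → ℝ) (E : TLState n → Prop)
    (s : TLState n) : ℝ≥0∞ := ∑' T : ℕ, ENNReal.ofReal (1 - hitWithin P E T s)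

/-- Probability that the chain started at `s` never visits a state in `B`. -/
def avoidProb {n : ℕ} (P : TLState n → TLState n → ℝ) (B : TLState n → Prop)
    (s : TLState n) : ℝ := 1 - hitProb P B s

/-- `E[τ_E · 1_{B is never visited}]` for the chain started at `s` (in `ℝ≥0∞`),
using `P[τ_E > T and B never visited] = P[B never visited] − P[E hit within T
steps, avoiding B]`, which is valid whenever `B` cannot be visited anymore once
`E` has been reached. -/
def expHitTimeAvoid {n : ℕ} (P : TLState n → TLState n → ℝ) (E B : TLState n → Prop)
    (s : TLState n) : ℝ≥0∞ :=
  ∑' T : ℕ, ENNReal.ofReal (avoidProb P B s - raceWithin P E B T s)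

/-- The global optimum for negative weight `w < 0`: the current solution is
`1^n` and the stored previous first bit is `0`. -/
def OptNeg {n : ℕ} (s : TLState n) : Prop := s.2 = allOnes n ∧ firstBit s.1 = false

/-- The global optimum for positive weight `w > 0`: the current solution is
`1^n` and the stored previous first bit is `1`. -/
def OptPos {n : ℕ} (s : TLState n) : Prop := s.2 = allOnes n ∧ firstBit s.1 = true

/-- Event I for the (1+1) EA (for `w < -1`): first bit pattern `(0,1)`,
current solution not `1^n`, and `|x_{[2..n]}| ≥ w + n`. -/
def EventIEA {n : ℕ} (w : ℤ) (s : TLState n) : Prop :=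
  firstBit s.1 = false ∧ firstBit s.2 = true ∧ s.2 ≠ allOnes n ∧
    w + n ≤ (onesTail s.2 : ℤ)

/-- Event I for the RLS (for `w < -1`): first bit pattern `(0,1)` and the
current solution is not `1^n`. -/
def EventIRLS {n : ℕ} (s : TLState n) : Prop :=
  firstBit s.1 = false ∧ firstBit s.2 = true ∧ s.2 ≠ allOnes n

/-- Event II: the current solution is `1^n` and the stored first bit is `1`. -/
def EventII {n : ℕ} (s : TLState n) : Prop :=
  firstBit s.1 = true ∧ s.2 = allOnes n

/-- Event III for the (1+1) EA (for `w > 0`): first bit pattern `(1,0)` and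
`|x_{[2..n]}| ≥ n - w + 1`. -/
def EventIIIEA {n : ℕ} (w : ℤ) (s : TLState n) : Prop :=
  firstBit s.1 = true ∧ firstBit s.2 = false ∧ (n : ℤ) - w + 1 ≤ (onesTail s.2 : ℤ)

/-- Event III for the RLS (for `w > 1`): first bit pattern `(1,0)`. -/
def EventIIIRLS {n : ℕ} (s : TLState n) : Prop :=
  firstBit s.1 = true ∧ firstBit s.2 = false

/-- Euler's number `e`. -/
def eu : ℝ := Real.exp 1

end

namespace Stmt11Aux

open Finset

variable {n : ℕ}

lemma firstBit_eq (hn : 0 < n) (x : BitStr n) : firstBit x = x ⟨0, hn⟩ := by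
  simp [firstBit, hn]

lemma firstBit_allOnes (hn : 0 < n) : firstBit (allOnes n) = true := by
  simp [firstBit, hn, allOnes]

lemma ones_add_zeros (x : BitStr n) : ones x + zeros x = n := by
  classical
  have := Finset.card_filter_add_card_filter_not
    (s := (Finset.univ : Finset (Fin n))) (p := fun i => x i = true)
  simpa [ones, zeros, Finset.card_univ] using this

lemma zeros_eq_zero_iff (x : BitStr n) : zeros x = 0 ↔ x = allOnes n := by
  constructor
  · intro h
    funext i
    cases hxi : x i
    · have hmem : i ∈ Finset.univ.filter fun j => x j = false := by simp [hxi]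
      have hpos := Finset.card_pos.mpr ⟨i, hmem⟩
      have : (0:ℕ) < zeros x := hpos
      omega
    · simp [allOnes]
  · intro h; subst h; simp [zeros, allOnes]

lemma hamming_allOnes (x : BitStr n) : hamming x (allOnes n) = zeros x := by
  unfold hamming zeros
  congr 1
  apply Finset.filter_congr
  intro i _
  simp [allOnes]

lemma ones_le (x : BitStr n) : ones x ≤ n := by
  have := ones_add_zeros x; omega

lemma zeros_le (x : BitStr n) : zeros x ≤ n := by
  have := ones_add_zeros x; omega

/-! ### Mutation as a product measure: marginals -/

lemma hamming_update_ne (x y : BitStr n) (a : Fin n) (b : Bool) (hya : y a = x a)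
    (hb : b ≠ x a) :
    hamming x (Function.update y a b) = hamming x y + 1 := by
  unfold hamming
  have : (Finset.univ.filter fun i => x i ≠ (Function.update y a b) i) =
      insert a (Finset.univ.filter fun i => x i ≠ y i) := by
    ext i
    by_cases hia : i = a
    · subst hia
      simp [Function.update_self, Ne.symm hb]
    · simp [Function.update_of_ne hia, hia]
  rw [this, Finset.card_insert_of_notMem]
  simp [hya]

lemma hamming_update_eq (x y : BitStr n) (a : Fin n) (hya : y a ≠ x a) :
    hamming x y = hamming x (Function.update y a (x a)) + 1 := by
  have h1 : hamming x (Function.update (Function.update y a (x a)) a (y a))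
      = hamming x (Function.update y a (x a)) + 1 := by
    apply hamming_update_ne
    · simp
    · exact hya
  have h2 : Function.update (Function.update y a (x a)) a (y a) = y := by
    funext i
    by_cases hia : i = a
    · subst hia; simp
    · simp [Function.update_of_ne hia]
  rwa [h2] at h1

lemma hamming_le (x y : BitStr n) : hamming x y ≤ n := by
  simpa [hamming] using Finset.card_filter_le Finset.univ (fun i => x i ≠ y i)

lemma hamming_lt_of_eq (x y : BitStr n) (a : Fin n) (h : y a = x a) : hamming x y < n := by
  have : (Finset.univ.filter fun i => x i ≠ y i) ⊆ Finset.univ.erase a := by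
    intro i hi
    simp only [Finset.mem_filter] at hi
    apply Finset.mem_erase.mpr
    refine ⟨?_, Finset.mem_univ _⟩
    rintro rfl
    exact hi.2 h.symm
  have hc := Finset.card_le_card this
  have : a ∈ (Finset.univ : Finset (Fin n)) := Finset.mem_univ a
  have := Finset.card_erase_of_mem this
  unfold hamming
  have hn : 0 < n := a.pos
  simp only [Finset.card_univ, Fintype.card_fin] at *
  omega

/-- Key pairing identity: flipping a differing coordinate back. -/
lemma mut_pair (x y : BitStr n) (a : Fin n) (hya : y a ≠ x a) :
    (1/n : ℝ) * mutEA x (Function.update y a (x a)) = (1 - 1/n) * mutEA x y := by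
  have hh := hamming_update_eq x y a hya
  set h' := hamming x (Function.update y a (x a)) with hh'
  have hlt : h' < n := by
    have := hamming_lt_of_eq x (Function.update y a (x a)) a (by simp)
    exact this
  unfold mutEA
  rw [← hh']
  rw [hh]
  have : n - h' = (n - (h' + 1)) + 1 := by omega
  rw [this]
  ring

/-- The event that all coordinates in `A` differ from `x`. -/
noncomputable def marg (x : BitStr n) (A : Finset (Fin n)) : ℝ :=
  ∑ y ∈ Finset.univ.filter (fun y : BitStr n => ∀ i ∈ A, y i ≠ x i), mutEA x y

lemma marg_insert (x : BitStr n) (A : Finset (Fin n)) (a : Fin n) (ha : a ∉ A) :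
    marg x (insert a A) = (1/n : ℝ) * marg x A := by
  classical
  have hsplit : marg x A = marg x (insert a A) +
      ∑ y ∈ Finset.univ.filter (fun y : BitStr n =>
        (∀ i ∈ A, y i ≠ x i) ∧ y a = x a), mutEA x y := by
    unfold marg
    rw [← Finset.sum_filter_add_sum_filter_not
      (Finset.univ.filter (fun y : BitStr n => ∀ i ∈ A, y i ≠ x i))
      (fun y => y a ≠ x a)]
    congr 1
    · congr 1
      ext y
      simp only [Finset.mem_filter, Finset.mem_univ, true_and, Finset.mem_insert]
      constructor
      · rintro ⟨h1, h2⟩ i hi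
        rcases (by simpa using hi : i = a ∨ i ∈ A) with rfl | hi'
        · exact h2
        · exact h1 i hi'
      · intro h
        exact ⟨fun i hi => h i (by simp [hi]), h a (by simp)⟩
    · congr 1
      ext y
      simp only [Finset.mem_filter, Finset.mem_univ, true_and, not_not]
  -- pairing: (1/n) * second sum = (1-1/n) * marg x (insert a A)
  have hpair : (1/n : ℝ) * (∑ y ∈ Finset.univ.filter (fun y : BitStr n =>
        (∀ i ∈ A, y i ≠ x i) ∧ y a = x a), mutEA x y)
      = (1 - 1/n) * marg x (insert a A) := by
    unfold marg
    rw [Finset.mul_sum, Finset.mul_sum]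
    apply Finset.sum_nbij' (i := fun y => Function.update y a (!(x a)))
      (j := fun y => Function.update y a (x a))
    · intro y hy
      simp only [Finset.mem_filter, Finset.mem_univ, true_and] at hy ⊢
      intro i hi
      rcases (by simpa using hi : i = a ∨ i ∈ A) with rfl | hi'
      · simp
      · have hia : i ≠ a := by rintro rfl; exact ha hi'
        rw [Function.update_of_ne hia]
        exact hy.1 i hi'
    · intro y hy
      simp only [Finset.mem_filter, Finset.mem_univ, true_and] at hy ⊢
      constructor
      · intro i hi
        have hia : i ≠ a := by rintro rfl; exact ha hi
        rw [Function.update_of_ne hia]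
        exact hy i (by simp [hi])
      · simp
    · intro y hy
      simp only [Finset.mem_filter, Finset.mem_univ, true_and] at hy
      funext i
      by_cases hia : i = a
      · subst hia; simp [hy.2]
      · simp [Function.update_of_ne hia]
    · intro y hy
      simp only [Finset.mem_filter, Finset.mem_univ, true_and] at hy
      have hya : y a ≠ x a := hy a (by simp)
      funext i
      by_cases hia : i = a
      · rw [hia]
        simp only [Function.update_self]
        cases hxa : x a <;> cases hyaa : y a <;> simp_all
      · simp [Function.update_of_ne hia]
    · intro y hy
      simp only [Finset.mem_filter, Finset.mem_univ, true_and] at hy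
      -- goal: (1/n) * mutEA x y = (1-1/n) * mutEA x (update y a (!(x a)))
      have hb : (!(x a)) ≠ x a := by cases x a <;> simp
      have := mut_pair x (Function.update y a (!(x a))) a (by simp [hb])
      have hupd : Function.update (Function.update y a (!(x a))) a (x a)
          = Function.update y a (x a) := by
        funext i
        by_cases hia : i = a
        · subst hia; simp
        · simp [Function.update_of_ne hia]
      rw [hupd] at this
      have hyx : Function.update y a (x a) = y := by
        funext i
        by_cases hia : i = a
        · subst hia; simp [hy.2]
        · simp [Function.update_of_ne hia]
      rw [hyx] at this
      linarith [this]
  -- combine: marg(ins) = marg A - second ; (1/n)*second = (1-1/n)*marg(ins)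
  have hid : marg x (insert a A) = (1/n:ℝ) * marg x (insert a A)
      + (1 - 1/n) * marg x (insert a A) := by ring
  rw [hid, ← hpair, hsplit]
  ring

lemma marg_univ (x : BitStr n) : marg x Finset.univ = (1/n : ℝ)^n := by
  classical
  unfold marg
  have : Finset.univ.filter (fun y : BitStr n => ∀ i ∈ Finset.univ, y i ≠ x i)
      = {fun i => !(x i)} := by
    ext y
    constructor
    · intro hy
      have h := (Finset.mem_filter.mp hy).2
      apply Finset.mem_singleton.mpr
      funext i
      have hi := h i (Finset.mem_univ i)
      cases hxi : x i <;> cases hyi : y i <;> simp_all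
    · intro hy
      have h := Finset.mem_singleton.mp hy
      subst h
      apply Finset.mem_filter.mpr
      refine ⟨Finset.mem_univ _, fun i _ => ?_⟩
      cases hxi : x i <;> simp [hxi]
  rw [this, Finset.sum_singleton]
  unfold mutEA
  have : hamming x (fun i => !(x i)) = n := by
    unfold hamming
    have : (Finset.univ.filter fun i => x i ≠ !(x i)) = Finset.univ := by
      ext i; simp
    rw [this]
    simp
  rw [this]
  simp

lemma marg_card (hn : 0 < n) (x : BitStr n) (A : Finset (Fin n)) :
    marg x A = (1/n : ℝ)^A.card := by
  classical
  -- first: marg x A = (1/n)^A.card * marg x ∅, by induction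
  have key : ∀ B : Finset (Fin n), marg x B = (1/n : ℝ)^B.card * marg x ∅ := by
    intro B
    induction B using Finset.induction_on with
    | empty => simp
    | insert _ _ ha ih =>
      rw [marg_insert x _ _ ha, ih, Finset.card_insert_of_notMem ha]
      ring
  have huniv := key Finset.univ
  rw [marg_univ] at huniv
  have hcard : (Finset.univ : Finset (Fin n)).card = n := by simp
  rw [hcard] at huniv
  have hne : ((1:ℝ)/n)^n ≠ 0 := by
    have : (n:ℝ) ≠ 0 := by positivity
    positivity
  have hempty : marg x ∅ = 1 := by
    field_simp at huniv
    nlinarith [huniv, sq_nonneg (marg x ∅)]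
  rw [key A, hempty, mul_one]

lemma sum_mutEA (hn : 0 < n) (x : BitStr n) : ∑ y : BitStr n, mutEA x y = 1 := by
  have := marg_card hn x ∅
  unfold marg at this
  simpa using this

/-! ### Generic chain lemmas -/

section Chain

variable {P : TLState n → TLState n → ℝ} {E A B : TLState n → Prop}

lemma hitWithin_succ_eq (P : TLState n → TLState n → ℝ) (E : TLState n → Prop)
    (T : ℕ) (s : TLState n) :
    hitWithin P E (T+1) s = if E s then 1 else ∑ t, P s t * hitWithin P E T t := rfl

lemma raceWithin_succ_eq (P : TLState n → TLState n → ℝ) (A B : TLState n → Prop)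
    (T : ℕ) (s : TLState n) :
    raceWithin P A B (T+1) s =
      if A s then 1 else if B s then 0 else ∑ t, P s t * raceWithin P A B T t := rfl

lemma hitWithin_nonneg (hP0 : ∀ s t, 0 ≤ P s t) :
    ∀ T s, 0 ≤ hitWithin P E T s := by
  intro T
  induction T with
  | zero => intro s; unfold hitWithin; positivity
  | succ T ih =>
    intro s
    unfold hitWithin
    split
    · norm_num
    · exact Finset.sum_nonneg fun t _ => mul_nonneg (hP0 s t) (ih t)

lemma hitWithin_le_one (hP0 : ∀ s t, 0 ≤ P s t) (hP1 : ∀ s, ∑ t, P s t = 1) :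
    ∀ T s, hitWithin P E T s ≤ 1 := by
  intro T
  induction T with
  | zero => intro s; unfold hitWithin; split <;> norm_num
  | succ T ih =>
    intro s
    unfold hitWithin
    split
    · norm_num
    · calc ∑ t, P s t * hitWithin P E T t ≤ ∑ t, P s t * 1 :=
        Finset.sum_le_sum fun t _ => mul_le_mul_of_nonneg_left (ih t) (hP0 s t)
      _ = 1 := by simp [hP1 s]

lemma hitWithin_eq_one_of (T : ℕ) (s : TLState n) (h : E s) :
    hitWithin P E T s = 1 := by
  cases T <;> unfold hitWithin <;> simp [h]

lemma raceWithin_nonneg (hP0 : ∀ s t, 0 ≤ P s t) :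
    ∀ T s, 0 ≤ raceWithin P A B T s := by
  intro T
  induction T with
  | zero => intro s; unfold raceWithin; positivity
  | succ T ih =>
    intro s
    unfold raceWithin
    split
    · norm_num
    · split
      · norm_num
      · exact Finset.sum_nonneg fun t _ => mul_nonneg (hP0 s t) (ih t)

/-- The superharmonic bound on the race probability. -/
lemma raceWithin_le_phi (hP0 : ∀ s t, 0 ≤ P s t) (φ : TLState n → ℝ)
    (hφ0 : ∀ s, 0 ≤ φ s) (hφA : ∀ s, A s → 1 ≤ φ s)
    (hsup : ∀ s, ¬ A s → ¬ B s → ∑ t, P s t * φ t ≤ φ s) :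
    ∀ T s, raceWithin P A B T s ≤ φ s := by
  intro T
  induction T with
  | zero =>
    intro s; unfold raceWithin
    split
    · exact hφA s (by assumption)
    · exact hφ0 s
  | succ T ih =>
    intro s
    unfold raceWithin
    split
    · exact hφA s (by assumption)
    · split
      · exact hφ0 s
      · calc ∑ t, P s t * raceWithin P A B T t ≤ ∑ t, P s t * φ t :=
          Finset.sum_le_sum fun t _ => mul_le_mul_of_nonneg_left (ih t) (hP0 s t)
        _ ≤ φ s := hsup s (by assumption) (by assumption)

/-- Decomposition: hitting `E ∪ A` is bounded by hitting `E` plus reaching `A` before `E`. -/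
lemma hitWithin_union_le (hP0 : ∀ s t, 0 ≤ P s t) :
    ∀ T s, hitWithin P (fun u => E u ∨ A u) T s ≤
      hitWithin P E T s + raceWithin P A E T s := by
  intro T
  induction T with
  | zero =>
    intro s
    unfold hitWithin raceWithin
    by_cases hE : E s
    · simp [hE]
      split <;> [positivity; positivity]
    · by_cases hA : A s
      · simp [hE, hA]
      · simp [hE, hA]
  | succ T ih =>
    intro s
    by_cases hE : E s
    · unfold hitWithin raceWithin
      have h1 : hitWithin P E (T+1) s = 1 := hitWithin_eq_one_of (T+1) s hE
      unfold hitWithin at h1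
      rw [h1]
      have := raceWithin_nonneg (A := A) (B := E) hP0 (T+1) s
      unfold raceWithin at this
      have hle : hitWithin P (fun u => E u ∨ A u) (T+1) s ≤ 1 + 0 := by
        unfold hitWithin
        split
        · norm_num
        · exact absurd (Or.inl hE) (by assumption)
      unfold hitWithin at hle
      linarith
    · by_cases hA : A s
      · have hrace : raceWithin P A E (T+1) s = 1 := by unfold raceWithin; simp [hA]
        have hhit : 0 ≤ hitWithin P E (T+1) s := hitWithin_nonneg hP0 (T+1) s
        have hle : hitWithin P (fun u => E u ∨ A u) (T+1) s = 1 := by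
          unfold hitWithin; simp [hA, hE]
        rw [hle, hrace]
        linarith
      · have e1 : hitWithin P (fun u => E u ∨ A u) (T+1) s
            = ∑ t, P s t * hitWithin P (fun u => E u ∨ A u) T t := by
          rw [hitWithin_succ_eq]; simp [hE, hA]
        have e2 : hitWithin P E (T+1) s = ∑ t, P s t * hitWithin P E T t := by
          rw [hitWithin_succ_eq]; simp [hE]
        have e3 : raceWithin P A E (T+1) s = ∑ t, P s t * raceWithin P A E T t := by
          rw [raceWithin_succ_eq]; simp [hA, hE]
        rw [e1, e2, e3, ← Finset.sum_add_distrib]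
        apply Finset.sum_le_sum
        intro t _
        have := ih t
        nlinarith [hP0 s t, this]

/-- Geometric convergence to an absorbing goal reachable in one step. -/
lemma hitWithin_geom (hP0 : ∀ s t, 0 ≤ P s t) (hP1 : ∀ s, ∑ t, P s t = 1)
    (q0 : ℝ) (hq0 : 0 < q0) (hq1 : q0 ≤ 1)
    (hstep : ∀ u, ¬ E u → ∃ t, E t ∧ q0 ≤ P u t) :
    ∀ T u, 1 - (1-q0)^T ≤ hitWithin P E T u := by
  intro T
  induction T with
  | zero => intro u; unfold hitWithin; split <;> norm_num
  | succ T ih =>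
    intro u
    by_cases hE : E u
    · rw [hitWithin_eq_one_of _ _ hE]
      nlinarith [pow_nonneg (by linarith : (0:ℝ) ≤ 1 - q0) (T+1)]
    · obtain ⟨t₀, ht₀E, ht₀⟩ := hstep u hE
      have e1 : hitWithin P E (T+1) u = ∑ t, P u t * hitWithin P E T t := by
        rw [hitWithin_succ_eq]; simp [hE]
      rw [e1]
      set L : ℝ := 1 - (1-q0)^T with hL
      have hLnn : (0:ℝ) ≤ (1-q0)^T := pow_nonneg (by linarith) T
      have key : P u t₀ * (1 - L) ≤ ∑ t, P u t * (hitWithin P E T t - L) := by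
        have h1t : hitWithin P E T t₀ = 1 := hitWithin_eq_one_of T t₀ ht₀E
        have key0 : P u t₀ * (hitWithin P E T t₀ - L)
            ≤ ∑ t, P u t * (hitWithin P E T t - L) := by
          apply Finset.single_le_sum (f := fun t => P u t * (hitWithin P E T t - L))
          · intro t _
            have h1 := ih t
            exact mul_nonneg (hP0 u t) (by linarith)
          · exact Finset.mem_univ t₀
        rwa [h1t] at key0
      have expand : ∑ t, P u t * (hitWithin P E T t - L)
          = (∑ t, P u t * hitWithin P E T t) - L := by
        have : ∀ t : TLState n, P u t * (hitWithin P E T t - L)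
            = P u t * hitWithin P E T t - P u t * L := fun t => by ring
        simp only [this]
        rw [Finset.sum_sub_distrib, ← Finset.sum_mul, hP1 u, one_mul]
      rw [expand] at key
      have hfact : (1:ℝ) - L = (1-q0)^T := by simp [hL]
      have h2 : q0 * (1 - L) ≤ P u t₀ * (1 - L) := by
        apply mul_le_mul_of_nonneg_right ht₀
        rw [hfact]; exact hLnn
      calc 1 - (1-q0)^(T+1) = L + q0 * (1 - L) := by rw [hfact, hL, pow_succ]; ring
        _ ≤ L + P u t₀ * (1 - L) := by linarith
        _ ≤ L + ((∑ t, P u t * hitWithin P E T t) - L) := by linarith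
        _ = ∑ t, P u t * hitWithin P E T t := by ring

lemma hitProb_ge_hitWithin (hP0 : ∀ s t, 0 ≤ P s t) (hP1 : ∀ s, ∑ t, P s t = 1)
    (T : ℕ) (s : TLState n) : hitWithin P E T s ≤ hitProb P E s := by
  apply le_ciSup (f := fun T => hitWithin P E T s)
  exact ⟨1, by rintro _ ⟨T', rfl⟩; exact hitWithin_le_one hP0 hP1 T' s⟩

end Chain

/-! ### Transition matrix algebra -/

lemma sum_ite_and_eq {β : Type*} [Fintype β] [DecidableEq β] (a : β) (c : Prop)
    [Decidable c] (F : β → ℝ) :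
    ∑ t : β, (if c ∧ t = a then F t else 0) = if c then F a else 0 := by
  by_cases hc : c
  · simp only [hc, true_and]
    rw [Finset.sum_ite_eq' Finset.univ a F]
    simp
  · simp [hc]

lemma tlTrans_mul_sum (m : BitStr n → BitStr n → ℝ) (w : ℤ) (u : TLState n)
    (g : TLState n → ℝ) :
    ∑ t, tlTrans m w u t * g t =
      (∑ y, if fW w u.1 u.2 ≤ fW w u.2 y then m u.2 y * g (u.2, y) else 0) +
      (∑ y, if ¬ fW w u.1 u.2 ≤ fW w u.2 y then m u.2 y else 0) * g u := by
  unfold tlTrans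
  simp only [add_mul, Finset.sum_add_distrib]
  congr 1
  · calc ∑ t : TLState n,
        (∑ y, if fW w u.1 u.2 ≤ fW w u.2 y ∧ t = (u.2, y) then m u.2 y else 0) * g t
        = ∑ t : TLState n, ∑ y,
            (if fW w u.1 u.2 ≤ fW w u.2 y ∧ t = (u.2, y) then m u.2 y * g t else 0) := by
          apply Finset.sum_congr rfl; intro t _
          rw [Finset.sum_mul]
          apply Finset.sum_congr rfl; intro y _
          by_cases h : fW w u.1 u.2 ≤ fW w u.2 y ∧ t = (u.2, y) <;> simp [h]
      _ = ∑ y, ∑ t : TLState n,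
            (if fW w u.1 u.2 ≤ fW w u.2 y ∧ t = (u.2, y) then m u.2 y * g t else 0) :=
          Finset.sum_comm
      _ = ∑ y, (if fW w u.1 u.2 ≤ fW w u.2 y then m u.2 y * g (u.2, y) else 0) := by
          apply Finset.sum_congr rfl; intro y _
          exact sum_ite_and_eq (u.2, y) _ (fun t => m u.2 y * g t)
  · calc ∑ t : TLState n,
        (if t = u then ∑ y, (if ¬ fW w u.1 u.2 ≤ fW w u.2 y then m u.2 y else 0) else 0) * g t
        = ∑ t : TLState n, (if t = u then
            (∑ y, (if ¬ fW w u.1 u.2 ≤ fW w u.2 y then m u.2 y else 0)) * g t else 0) := by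
          apply Finset.sum_congr rfl; intro t _
          split <;> simp
      _ = (∑ y, (if ¬ fW w u.1 u.2 ≤ fW w u.2 y then m u.2 y else 0)) * g u := by
          rw [Finset.sum_ite_eq' Finset.univ u
            (fun t => (∑ y, (if ¬ fW w u.1 u.2 ≤ fW w u.2 y then m u.2 y else 0)) * g t)]
          simp

lemma sum_tlTrans (m : BitStr n → BitStr n → ℝ) (hm : ∀ x, ∑ y, m x y = 1)
    (w : ℤ) (u : TLState n) : ∑ t, tlTrans m w u t = 1 := by
  have h := tlTrans_mul_sum m w u (fun _ => 1)
  simp only [mul_one] at h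
  rw [h, ← hm u.2, ← Finset.sum_add_distrib]
  apply Finset.sum_congr rfl
  intro y _
  by_cases hc : fW w u.1 u.2 ≤ fW w u.2 y <;> simp [hc]

lemma tlTrans_nonneg (m : BitStr n → BitStr n → ℝ) (hm : ∀ x y, 0 ≤ m x y)
    (w : ℤ) (u t : TLState n) : 0 ≤ tlTrans m w u t := by
  unfold tlTrans
  have h1 : (0:ℝ) ≤ ∑ y, if fW w u.1 u.2 ≤ fW w u.2 y ∧ t = (u.2, y) then m u.2 y else 0 :=
    Finset.sum_nonneg fun y _ => by split <;> [exact hm u.2 y; norm_num]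
  have h2 : (0:ℝ) ≤ if t = u then ∑ y, if ¬ fW w u.1 u.2 ≤ fW w u.2 y then m u.2 y else 0
      else 0 := by
    split
    · exact Finset.sum_nonneg fun y _ => by split <;> [exact hm u.2 y; norm_num]
    · norm_num
  linarith

lemma mutEA_nonneg (hn : 0 < n) (x y : BitStr n) : 0 ≤ mutEA x y := by
  unfold mutEA
  have h1 : (0:ℝ) ≤ 1/n := by positivity
  have h2 : (0:ℝ) ≤ 1 - 1/n := by
    have : (1:ℝ) ≤ n := by exact_mod_cast hn
    have : 1/(n:ℝ) ≤ 1 := by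
      rw [div_le_one (by linarith)]; linarith
    linarith
  positivity

lemma mutRLS_nonneg (hn : 0 < n) (x y : BitStr n) : 0 ≤ mutRLS x y := by
  unfold mutRLS
  split
  · positivity
  · norm_num

lemma hamming_self (x : BitStr n) : hamming x x = 0 := by
  simp [hamming]

lemma sum_mutRLS (hn : 0 < n) (x : BitStr n) : ∑ y : BitStr n, mutRLS x y = 1 := by
  classical
  unfold mutRLS
  rw [← Finset.sum_filter]
  have himg : (Finset.univ.filter fun y : BitStr n => hamming x y = 1)
      = Finset.univ.image (fun i : Fin n => Function.update x i (!(x i))) := by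
    ext y
    simp only [Finset.mem_filter, Finset.mem_univ, true_and, Finset.mem_image]
    constructor
    · intro h
      obtain ⟨i, hi⟩ := Finset.card_eq_one.mp h
      have hmemi : i ∈ Finset.univ.filter (fun j => x j ≠ y j) := by
        rw [hi]; simp
      have hyi : x i ≠ y i := by simpa using hmemi
      refine ⟨i, ?_⟩
      funext j
      by_cases hji : j = i
      · rw [hji, Function.update_self]
        cases hxj : x i <;> cases hyj : y i <;> simp_all
      · rw [Function.update_of_ne hji]
        by_contra hne
        have hmemj : j ∈ Finset.univ.filter (fun j => x j ≠ y j) := by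
          simp [fun h : x j = y j => hne h]
        rw [hi] at hmemj
        exact hji (by simpa using hmemj)
    · rintro ⟨i, -, rfl⟩
      have h0 : hamming x x = 0 := hamming_self x
      have hres := hamming_update_ne x x i (!(x i)) rfl (by cases x i <;> simp)
      rw [h0] at hres
      exact hres
  rw [himg]
  have hinj : Function.Injective (fun i : Fin n => Function.update x i (!(x i))) := by
    intro i j hij
    by_contra hne
    have h1 := congrFun hij i
    simp only [Function.update_self] at h1
    rw [Function.update_of_ne hne] at h1
    cases hxi : x i <;> simp [hxi] at h1
  rw [Finset.sum_const, Finset.card_image_of_injective _ hinj, Finset.card_univ]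
  simp only [Fintype.card_fin, nsmul_eq_mul]
  field_simp

/-! ### The potential function and structural lemmas -/

lemma firstBit_allOnes' (hn : 0 < n) : firstBit (allOnes n) = true := firstBit_allOnes hn

lemma ne_allOnes_of_firstBit_false (hn : 0 < n) (x : BitStr n) (h : firstBit x = false) :
    x ≠ allOnes n := by
  intro heq; rw [heq, firstBit_allOnes hn] at h; simp at h

lemma ones_le_iff_zeros (x y : BitStr n) : ones x ≤ ones y ↔ zeros y ≤ zeros x := by
  have hx := ones_add_zeros x
  have hy := ones_add_zeros y
  omega

lemma onesTail_int (hn : 0 < n) (x : BitStr n) (hx : firstBit x = true) :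
    (onesTail x : ℤ) = (ones x : ℤ) - 1 := by
  classical
  have hfil : (Finset.univ.filter fun i : Fin n => x i = true ∧ (i:ℕ) ≠ 0)
      = (Finset.univ.filter fun i : Fin n => x i = true).erase ⟨0, hn⟩ := by
    ext i
    simp only [Finset.mem_filter, Finset.mem_univ, true_and, Finset.mem_erase]
    constructor
    · rintro ⟨h1, h2⟩
      exact ⟨by rintro rfl; exact h2 rfl, h1⟩
    · rintro ⟨h1, h2⟩
      refine ⟨h2, fun hi => h1 ?_⟩
      exact Fin.ext hi
  have hmem : (⟨0, hn⟩ : Fin n) ∈ Finset.univ.filter fun i : Fin n => x i = true := by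
    simp only [Finset.mem_filter, Finset.mem_univ, true_and]
    rw [← firstBit_eq hn x]; exact hx
  have hones : 1 ≤ ones x := by
    have : 0 < (Finset.univ.filter fun i : Fin n => x i = true).card :=
      Finset.card_pos.mpr ⟨_, hmem⟩
    exact this
  unfold onesTail ones at *
  rw [hfil, Finset.card_erase_of_mem hmem]
  push_cast
  omega

/-- The potential function: an upper bound for the probability that the EA
reaches the global optimum before Event I / Event II. -/
noncomputable def phi (w : ℤ) (st : TLState n) : ℝ :=
  if st.2 = allOnes n then (if firstBit st.1 = true then 0 else 1)
  else if firstBit st.2 = false then 1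
  else if firstBit st.1 = true then min 1 (eu * zeros st.2 / n)
  else if (zeros st.2 : ℤ) ≤ -w - 1 then 0
  else min 1 (eu * ((zeros st.2 : ℝ) + w) / n + eu * ((zeros st.2 : ℝ) + w) / n^2)

lemma eu_pos : (0:ℝ) < eu := Real.exp_pos 1

lemma phi_nonneg (hn : 0 < n) (w : ℤ) (st : TLState n) : 0 ≤ phi w st := by
  have hnr : (0:ℝ) < n := by exact_mod_cast hn
  unfold phi
  split
  · split <;> norm_num
  · split
    · norm_num
    · split
      · refine le_min (by norm_num) ?_
        have h0 : (0:ℝ) ≤ (zeros st.2 : ℝ) := Nat.cast_nonneg _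
        have heu : (0:ℝ) < eu := eu_pos
        positivity
      · split
        · norm_num
        · refine le_min (by norm_num) ?_
          have hz : (0:ℝ) ≤ (zeros st.2 : ℝ) + w := by
            have hnx : ¬ ((zeros st.2 : ℤ) ≤ -w - 1) := by assumption
            push_neg at hnx
            have h2 : (0:ℤ) ≤ (zeros st.2 : ℤ) + w := by omega
            have h3 : (0:ℝ) ≤ ((zeros st.2 : ℤ) : ℝ) + (w : ℝ) := by exact_mod_cast h2
            push_cast at h3
            linarith
          have heu : (0:ℝ) < eu := eu_pos
          have h1 : (0:ℝ) ≤ eu * ((zeros st.2 : ℝ) + w) / n := by positivity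
          have h2 : (0:ℝ) ≤ eu * ((zeros st.2 : ℝ) + w) / n^2 := by positivity
          linarith

lemma phi_le_one (hn : 0 < n) (w : ℤ) (st : TLState n) : phi w st ≤ 1 := by
  unfold phi
  split
  · split <;> norm_num
  · split
    · norm_num
    · split
      · exact min_le_left _ _
      · split
        · norm_num
        · exact min_le_left _ _

lemma phi_opt (hn : 0 < n) (w : ℤ) (st : TLState n) (h : OptNeg st) : phi w st = 1 := by
  obtain ⟨h1, h2⟩ := h
  unfold phi
  rw [if_pos h1, if_neg (by rw [h2]; exact Bool.false_ne_true)]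

/-- Generic union bound via marginals. -/
lemma union_bound (hn : 0 < n) (x : BitStr n) {ι : Type*} [DecidableEq ι] (I : Finset ι)
    (As : ι → Finset (Fin n)) (bad : Finset (BitStr n))
    (hcover : ∀ y ∈ bad, ∃ i ∈ I, ∀ a ∈ As i, y a ≠ x a) :
    ∑ y ∈ bad, mutEA x y ≤ ∑ i ∈ I, (1/n:ℝ)^((As i).card) := by
  classical
  have step1 : ∑ y ∈ bad, mutEA x y ≤
      ∑ y ∈ bad, ∑ i ∈ I, (if ∀ a ∈ As i, y a ≠ x a then mutEA x y else 0) := by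
    apply Finset.sum_le_sum
    intro y hy
    obtain ⟨i, hiI, hi⟩ := hcover y hy
    have hle := Finset.single_le_sum
      (f := fun i' => if ∀ a ∈ As i', y a ≠ x a then mutEA x y else 0)
      (fun i' _ => by
        split <;> [exact mutEA_nonneg hn x y; norm_num]) hiI
    simp only [if_pos hi] at hle
    exact hle
  have step2 : ∑ y ∈ bad, ∑ i ∈ I, (if ∀ a ∈ As i, y a ≠ x a then mutEA x y else 0)
      = ∑ i ∈ I, ∑ y ∈ bad, (if ∀ a ∈ As i, y a ≠ x a then mutEA x y else 0) :=
    Finset.sum_comm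
  have step3 : ∀ i ∈ I, ∑ y ∈ bad, (if ∀ a ∈ As i, y a ≠ x a then mutEA x y else 0)
      ≤ (1/n:ℝ)^((As i).card) := by
    intro i _
    rw [← marg_card hn x (As i)]
    unfold marg
    rw [← Finset.sum_filter]
    apply Finset.sum_le_sum_of_subset_of_nonneg
    · intro y hy
      simp only [Finset.mem_filter] at hy ⊢
      exact ⟨Finset.mem_univ y, hy.2⟩
    · intro y _ _
      exact mutEA_nonneg hn x y
  calc ∑ y ∈ bad, mutEA x y ≤ _ := step1
    _ = _ := step2
    _ ≤ _ := Finset.sum_le_sum step3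

/-! ### Flip constructions and exp bounds -/

def flipSet (x : BitStr n) (S : Finset (Fin n)) : BitStr n :=
  fun i => if i ∈ S then true else x i

lemma flipSet_diff (x : BitStr n) (S : Finset (Fin n)) (hS : ∀ i ∈ S, x i = false) :
    (Finset.univ.filter fun i => x i ≠ flipSet x S i) = S := by
  ext i
  simp only [Finset.mem_filter, Finset.mem_univ, true_and, flipSet]
  by_cases hiS : i ∈ S
  · simp [hiS, hS i hiS]
  · simp [hiS]

lemma flipSet_hamming (x : BitStr n) (S : Finset (Fin n)) (hS : ∀ i ∈ S, x i = false) :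
    hamming x (flipSet x S) = S.card := by
  unfold hamming; rw [flipSet_diff x S hS]

lemma flipSet_zeros (x : BitStr n) (S : Finset (Fin n)) (hS : ∀ i ∈ S, x i = false) :
    zeros (flipSet x S) = zeros x - S.card := by
  unfold zeros
  have : (Finset.univ.filter fun i => flipSet x S i = false)
      = (Finset.univ.filter fun i => x i = false) \ S := by
    ext i
    simp only [Finset.mem_filter, Finset.mem_univ, true_and, Finset.mem_sdiff, flipSet]
    by_cases hiS : i ∈ S
    · simp [hiS]
    · simp [hiS]
  rw [this, Finset.card_sdiff_of_subset]
  intro i hiS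
  simp only [Finset.mem_filter, Finset.mem_univ, true_and]
  exact hS i hiS

lemma flipSet_mut (hn : 0 < n) (x : BitStr n) (S : Finset (Fin n))
    (hS : ∀ i ∈ S, x i = false) :
    mutEA x (flipSet x S) = (1/n:ℝ)^S.card * (1 - 1/n:ℝ)^(n - S.card) := by
  unfold mutEA
  rw [flipSet_hamming x S hS]

lemma exp_le_q_pow (hn : 0 < n) : Real.exp (-1) ≤ (1 - 1/(n:ℝ))^(n-1) := by
  rcases eq_or_lt_of_le (Nat.succ_le_of_lt hn) with h1 | h2
  · have : n = 1 := h1.symm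
    subst this
    norm_num
  · have hn2 : 2 ≤ n := h2
    have hnr : (2:ℝ) ≤ n := by exact_mod_cast hn2
    set t : ℝ := 1/((n:ℝ)-1) with ht
    have htpos : 0 < t := by
      apply div_pos one_pos; linarith
    have hexp : 1 + t ≤ Real.exp t := by linarith [Real.add_one_le_exp t]
    have hq : Real.exp (-t) ≤ 1 - 1/n := by
      rw [Real.exp_neg]
      have h1t : (0:ℝ) < 1 + t := by linarith
      have hle : (Real.exp t)⁻¹ ≤ (1+t)⁻¹ := by
        apply inv_anti₀ h1t
        linarith [Real.add_one_le_exp t]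
      have heq2 : (1 + t)⁻¹ = 1 - 1/(n:ℝ) := by
        rw [ht]
        have hne : (n:ℝ) - 1 ≠ 0 := by linarith
        have hnn : (n:ℝ) ≠ 0 := by linarith
        rw [inv_eq_iff_eq_inv, inv_eq_one_div]
        field_simp; ring
      rw [← heq2]
      exact hle
    calc Real.exp (-1) = (Real.exp (-t))^(n-1) := by
          rw [← Real.exp_nat_mul]
          congr 1
          have hcast : ((n-1 : ℕ):ℝ) = (n:ℝ) - 1 := by
            have h1 : 1 ≤ n := hn
            push_cast [h1]
            ring
          have hne : (n:ℝ) - 1 ≠ 0 := by linarith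
          rw [hcast, ht, mul_neg, mul_one_div, div_self hne]
      _ ≤ (1 - 1/n)^(n-1) := by
          apply pow_le_pow_left₀ (Real.exp_pos _).le hq

lemma one_le_eu_q (hn : 0 < n) : 1 ≤ eu * (1 - 1/(n:ℝ))^(n-1) := by
  have h := exp_le_q_pow hn
  have : eu * Real.exp (-1) ≤ eu * (1 - 1/(n:ℝ))^(n-1) :=
    mul_le_mul_of_nonneg_left h eu_pos.le
  have heq : eu * Real.exp (-1) = 1 := by
    unfold eu
    rw [← Real.exp_add]
    norm_num
  linarith

/-- Bound on the potential of a successor state when the previous first bit is 1. -/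
lemma phi_pair_le (hn : 0 < n) (w : ℤ) (x y : BitStr n) (hx1 : firstBit x = true) :
    phi w (x, y) ≤ (if firstBit y = false then 1 else 0) + eu * zeros y / n := by
  have hnr : (0:ℝ) < n := by exact_mod_cast hn
  unfold phi
  simp only
  by_cases hy : y = allOnes n
  · rw [if_pos hy, if_pos hx1, hy]
    rw [firstBit_allOnes hn]
    simp [zeros_eq_zero_iff (allOnes n) |>.mpr rfl]
  · rw [if_neg hy]
    by_cases hyf : firstBit y = false
    · rw [if_pos hyf, if_pos hyf]
      have : (0:ℝ) ≤ eu * zeros y / n := by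
        have := eu_pos; positivity
      linarith
    · rw [if_neg hyf, if_neg hyf, if_pos hx1]
      have := min_le_right 1 (eu * (zeros y : ℝ) / n)
      linarith

/-! ### Class 4 (pattern (1,1)) superharmonicity core -/

lemma class4_core (hn : 0 < n) (w : ℤ) (x : BitStr n) (hx1 : firstBit x = true) :
    ∑ y ∈ Finset.univ.filter (fun y : BitStr n => zeros y ≤ zeros x), mutEA x y * phi w (x, y)
      ≤ (∑ y ∈ Finset.univ.filter (fun y : BitStr n => zeros y ≤ zeros x), mutEA x y)
        * (eu * zeros x / n) := by
  classical
  have hnr : (0:ℝ) < n := by exact_mod_cast hn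
  set j := zeros x with hj
  set Z : Finset (Fin n) := Finset.univ.filter (fun i => x i = false) with hZ
  have hZcard : Z.card = j := rfl
  set i₀ : Fin n := ⟨0, hn⟩ with hi₀
  have hxi₀ : x i₀ = true := by rw [← firstBit_eq hn x]; exact hx1
  have hi₀Z : i₀ ∉ Z := by simp [hZ, hxi₀]
  set S := Finset.univ.filter (fun y : BitStr n => zeros y ≤ j) with hS
  -- Step 1: pointwise bound on phi
  have step1 : ∑ y ∈ S, mutEA x y * phi w (x, y) ≤
      (∑ y ∈ S.filter (fun y => firstBit y = false), mutEA x y)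
      + (eu/n) * ∑ y ∈ S, mutEA x y * zeros y := by
    have hsplit : ∀ y ∈ S, mutEA x y * phi w (x, y) ≤
        (if firstBit y = false then mutEA x y else 0) + (eu/n) * (mutEA x y * zeros y) := by
      intro y _
      have hb := phi_pair_le hn w x y hx1
      have hm := mutEA_nonneg hn x y
      have := mul_le_mul_of_nonneg_left hb hm
      calc mutEA x y * phi w (x, y)
          ≤ mutEA x y * ((if firstBit y = false then 1 else 0) + eu * zeros y / n) := this
        _ = (if firstBit y = false then mutEA x y else 0) + (eu/n) * (mutEA x y * zeros y) := by
            split <;> ring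
    calc ∑ y ∈ S, mutEA x y * phi w (x, y)
        ≤ ∑ y ∈ S, ((if firstBit y = false then mutEA x y else 0)
            + (eu/n) * (mutEA x y * zeros y)) := Finset.sum_le_sum hsplit
      _ = (∑ y ∈ S.filter (fun y => firstBit y = false), mutEA x y)
          + (eu/n) * ∑ y ∈ S, mutEA x y * zeros y := by
          rw [Finset.sum_add_distrib, ← Finset.mul_sum]
          congr 1
          exact (Finset.sum_filter _ _).symm
  -- KEY1 : bad sum ≤ j/n²
  have key1 : ∑ y ∈ S.filter (fun y => firstBit y = false), mutEA x y ≤ (j:ℝ)/n^2 := by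
    have hub := union_bound hn x Z (fun i => {i₀, i}) (S.filter (fun y => firstBit y = false)) ?_
    · calc ∑ y ∈ S.filter (fun y => firstBit y = false), mutEA x y
          ≤ ∑ i ∈ Z, (1/n:ℝ)^(({i₀, i} : Finset (Fin n)).card) := hub
        _ = ∑ i ∈ Z, (1/n:ℝ)^2 := by
            apply Finset.sum_congr rfl
            intro i hiZ
            have hne : i₀ ≠ i := by
              rintro rfl; exact hi₀Z hiZ
            rw [Finset.card_insert_of_notMem (by simp [hne]), Finset.card_singleton]
        _ = (j:ℝ)/n^2 := by
            rw [Finset.sum_const, hZcard, nsmul_eq_mul]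
            field_simp
    · intro y hy
      simp only [Finset.mem_filter, Finset.mem_univ, true_and, hS] at hy
      obtain ⟨hyS, hyf⟩ := hy
      have hyi₀ : y i₀ = false := by rw [← firstBit_eq hn y]; exact hyf
      -- there exists i ∈ Z with y i = true
      have hex : ∃ i ∈ Z, y i = true := by
        by_contra hno
        push_neg at hno
        have hsub : insert i₀ Z ⊆ Finset.univ.filter (fun i => y i = false) := by
          intro i hi
          rcases Finset.mem_insert.mp hi with rfl | hiZ
          · simp [hyi₀]
          · have := hno i hiZ
            simp only [Finset.mem_filter, Finset.mem_univ, true_and]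
            cases hyi : y i
            · rfl
            · exact absurd hyi this
        have hc := Finset.card_le_card hsub
        rw [Finset.card_insert_of_notMem hi₀Z, hZcard] at hc
        have : zeros y ≤ j := hyS
        unfold zeros at this
        omega
      obtain ⟨i, hiZ, hyi⟩ := hex
      refine ⟨i, hiZ, ?_⟩
      intro a ha
      rcases Finset.mem_insert.mp ha with rfl | ha
      · rw [hyi₀, hxi₀]; simp
      · rw [Finset.mem_singleton] at ha
        subst ha
        have hxa : x a = false := by
          simp only [hZ, Finset.mem_filter, Finset.mem_univ, true_and] at hiZ
          exact hiZ
        rw [hyi, hxa]; simp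
  -- KEY2 : (j:ℝ)/n² ≤ (eu/n) Σ_S mut (j - zeros y)
  have key2 : (j:ℝ)/n^2 ≤ (eu/n) * ∑ y ∈ S, mutEA x y * ((j:ℝ) - zeros y) := by
    have hlow : (j:ℝ) * ((1/n:ℝ) * (1 - 1/n)^(n-1))
        ≤ ∑ y ∈ S, mutEA x y * ((j:ℝ) - zeros y) := by
      have himg : ∑ y ∈ Z.image (fun i => flipSet x {i}), mutEA x y * ((j:ℝ) - zeros y)
          = (j:ℝ) * ((1/n:ℝ) * (1 - 1/n)^(n-1)) := by
        rw [Finset.sum_image]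
        · have hval : ∀ i ∈ Z, mutEA x (flipSet x {i}) * ((j:ℝ) - zeros (flipSet x {i}))
              = (1/n:ℝ) * (1 - 1/n)^(n-1) := by
            intro i hiZ
            have hxi : x i = false := by
              simp only [hZ, Finset.mem_filter, Finset.mem_univ, true_and] at hiZ
              exact hiZ
            have hsing : ∀ a ∈ ({i} : Finset (Fin n)), x a = false := by
              intro a ha; rw [Finset.mem_singleton] at ha; subst ha; exact hxi
            have hmut := flipSet_mut hn x {i} hsing
            have hzer := flipSet_zeros x {i} hsing
            rw [Finset.card_singleton] at hmut hzer
            have hjpos : 1 ≤ j := by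
              have : i ∈ Z := hiZ
              have := Finset.card_pos.mpr ⟨i, this⟩
              omega
            rw [hmut, hzer]
            have : ((j - 1 : ℕ):ℝ) = (j:ℝ) - 1 := by
              push_cast [hjpos]; ring
            rw [this]
            ring_nf
          rw [Finset.sum_congr rfl hval, Finset.sum_const, hZcard, nsmul_eq_mul]
        · intro i hiZ i' hiZ' heq
          by_contra hne
          have h1 := congrFun heq i
          dsimp only at h1
          have hxi : x i = false := by
            simp only [hZ, Finset.mem_coe, Finset.mem_filter, Finset.mem_univ, true_and] at hiZ
            exact hiZ
          have e1 : flipSet x {i} i = true := by simp [flipSet]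
          have e2 : flipSet x {i'} i = x i := by simp [flipSet, hne]
          rw [e1, e2, hxi] at h1
          exact Bool.noConfusion h1
      rw [← himg]
      apply Finset.sum_le_sum_of_subset_of_nonneg
      · intro y hy
        obtain ⟨i, hiZ, rfl⟩ := Finset.mem_image.mp hy
        have hxi : x i = false := by
          simp only [hZ, Finset.mem_filter, Finset.mem_univ, true_and] at hiZ
          exact hiZ
        have hsing : ∀ a ∈ ({i} : Finset (Fin n)), x a = false := by
          intro a ha; rw [Finset.mem_singleton] at ha; subst ha; exact hxi
        have hzer := flipSet_zeros x {i} hsing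
        simp only [hS, Finset.mem_filter, Finset.mem_univ, true_and]
        rw [hzer]
        omega
      · intro y hyS _
        simp only [hS, Finset.mem_filter, Finset.mem_univ, true_and] at hyS
        have h1 : (zeros y : ℝ) ≤ (j:ℝ) := by exact_mod_cast hyS
        have := mutEA_nonneg hn x y
        nlinarith
    have heq : (eu/n) * ((j:ℝ) * ((1/n:ℝ) * (1 - 1/n)^(n-1)))
        = ((j:ℝ)/n^2) * (eu * (1 - 1/n)^(n-1)) := by ring
    have h1 : ((j:ℝ)/n^2) * 1 ≤ ((j:ℝ)/n^2) * (eu * (1 - 1/n)^(n-1)) := by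
      apply mul_le_mul_of_nonneg_left (one_le_eu_q hn)
      positivity
    calc (j:ℝ)/n^2 = ((j:ℝ)/n^2) * 1 := by ring
      _ ≤ ((j:ℝ)/n^2) * (eu * (1 - 1/n)^(n-1)) := h1
      _ = (eu/n) * ((j:ℝ) * ((1/n:ℝ) * (1 - 1/n)^(n-1))) := heq.symm
      _ ≤ (eu/n) * ∑ y ∈ S, mutEA x y * ((j:ℝ) - zeros y) := by
          apply mul_le_mul_of_nonneg_left hlow
          exact div_nonneg eu_pos.le hnr.le
  -- Final algebra
  have expand : (eu/n) * ∑ y ∈ S, mutEA x y * ((j:ℝ) - zeros y)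
      + (eu/n) * ∑ y ∈ S, mutEA x y * zeros y
      = (∑ y ∈ S, mutEA x y) * (eu * j / n) := by
    rw [← mul_add, ← Finset.sum_add_distrib]
    have : ∀ y ∈ S, mutEA x y * ((j:ℝ) - zeros y) + mutEA x y * zeros y
        = mutEA x y * j := by intro y _; ring
    rw [Finset.sum_congr rfl this, ← Finset.sum_mul]
    ring
  calc ∑ y ∈ S, mutEA x y * phi w (x, y)
      ≤ (∑ y ∈ S.filter (fun y => firstBit y = false), mutEA x y)
        + (eu/n) * ∑ y ∈ S, mutEA x y * zeros y := step1
    _ ≤ (j:ℝ)/n^2 + (eu/n) * ∑ y ∈ S, mutEA x y * zeros y := by linarith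
    _ ≤ (eu/n) * ∑ y ∈ S, mutEA x y * ((j:ℝ) - zeros y)
        + (eu/n) * ∑ y ∈ S, mutEA x y * zeros y := by linarith
    _ = (∑ y ∈ S, mutEA x y) * (eu * j / n) := expand

/-! ### Class 3 (pattern (0,1)) superharmonicity core -/

lemma class3_core (hn : 0 < n) (w : ℤ) (hw2 : w ≤ -1) (x : BitStr n)
    (hx1 : firstBit x = true) (hjW : -w ≤ (zeros x : ℤ)) :
    ∑ y ∈ Finset.univ.filter (fun y : BitStr n => (zeros y : ℤ) ≤ (zeros x : ℤ) + w),
        mutEA x y * phi w (x, y)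
      ≤ (∑ y ∈ Finset.univ.filter (fun y : BitStr n => (zeros y : ℤ) ≤ (zeros x : ℤ) + w),
          mutEA x y)
        * (eu * ((zeros x : ℝ) + w) / n + eu * ((zeros x : ℝ) + w) / n^2) := by
  classical
  have hnr : (0:ℝ) < n := by exact_mod_cast hn
  set j := zeros x with hj
  set W : ℕ := (-w).toNat with hW
  have hWint : (W:ℤ) = -w := Int.toNat_of_nonneg (by omega)
  have hW1 : 1 ≤ W := by omega
  have hWj : W ≤ j := by omega
  set M : ℕ := j - W with hM
  have hMint : (M:ℤ) = (j:ℤ) + w := by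
    push_cast [hM, Nat.cast_sub hWj]
    omega
  have hMreal : (M:ℝ) = (j:ℝ) + w := by
    have := hMint
    exact_mod_cast this
  set Z : Finset (Fin n) := Finset.univ.filter (fun i => x i = false) with hZ
  have hZcard : Z.card = j := rfl
  set i₀ : Fin n := ⟨0, hn⟩ with hi₀
  have hxi₀ : x i₀ = true := by rw [← firstBit_eq hn x]; exact hx1
  have hi₀Z : i₀ ∉ Z := by simp [hZ, hxi₀]
  set S := Finset.univ.filter (fun y : BitStr n => (zeros y : ℤ) ≤ (j:ℤ) + w) with hS
  have hSmem : ∀ y ∈ S, zeros y ≤ M := by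
    intro y hy
    simp only [hS, Finset.mem_filter, Finset.mem_univ, true_and] at hy
    omega
  -- Step 1: pointwise bound on phi
  have step1 : ∑ y ∈ S, mutEA x y * phi w (x, y) ≤
      (∑ y ∈ S.filter (fun y => firstBit y = false), mutEA x y)
      + (eu * M / n) * ∑ y ∈ S, mutEA x y := by
    have hsplit : ∀ y ∈ S, mutEA x y * phi w (x, y) ≤
        (if firstBit y = false then mutEA x y else 0) + (eu * M/n) * mutEA x y := by
      intro y hyS
      have hb := phi_pair_le hn w x y hx1
      have hm := mutEA_nonneg hn x y
      have hzM : (zeros y : ℝ) ≤ (M:ℝ) := by exact_mod_cast hSmem y hyS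
      have hb2 : phi w (x, y) ≤ (if firstBit y = false then 1 else 0) + eu * M / n := by
        have h1 : eu * (zeros y : ℝ) / n ≤ eu * M / n := by
          apply (div_le_div_iff_of_pos_right hnr).mpr
          exact mul_le_mul_of_nonneg_left hzM eu_pos.le
        linarith
      have := mul_le_mul_of_nonneg_left hb2 hm
      calc mutEA x y * phi w (x, y)
          ≤ mutEA x y * ((if firstBit y = false then 1 else 0) + eu * M / n) := this
        _ = (if firstBit y = false then mutEA x y else 0) + (eu * M/n) * mutEA x y := by
            split <;> ring
    calc ∑ y ∈ S, mutEA x y * phi w (x, y)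
        ≤ ∑ y ∈ S, ((if firstBit y = false then mutEA x y else 0)
            + (eu * M/n) * mutEA x y) := Finset.sum_le_sum hsplit
      _ = (∑ y ∈ S.filter (fun y => firstBit y = false), mutEA x y)
          + (eu * M/n) * ∑ y ∈ S, mutEA x y := by
          rw [Finset.sum_add_distrib, ← Finset.mul_sum]
          congr 1
          exact (Finset.sum_filter _ _).symm
  -- KEY1 : bad sum ≤ C(j, W+1) / n^(W+2)
  have key1 : ∑ y ∈ S.filter (fun y => firstBit y = false), mutEA x y
      ≤ (Nat.choose j (W+1) : ℝ) * (1/n:ℝ)^(W+2) := by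
    have hub := union_bound hn x (Finset.powersetCard (W+1) Z)
      (fun S' => insert i₀ S') (S.filter (fun y => firstBit y = false)) ?_
    · calc ∑ y ∈ S.filter (fun y => firstBit y = false), mutEA x y
          ≤ ∑ S' ∈ Finset.powersetCard (W+1) Z, (1/n:ℝ)^((insert i₀ S').card) := hub
        _ = ∑ S' ∈ Finset.powersetCard (W+1) Z, (1/n:ℝ)^(W+2) := by
            apply Finset.sum_congr rfl
            intro S' hS'
            obtain ⟨hsub, hcard⟩ := Finset.mem_powersetCard.mp hS'
            have hi₀S' : i₀ ∉ S' := fun h => hi₀Z (hsub h)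
            rw [Finset.card_insert_of_notMem hi₀S', hcard]
        _ = (Nat.choose j (W+1) : ℝ) * (1/n:ℝ)^(W+2) := by
            rw [Finset.sum_const, Finset.card_powersetCard, hZcard, nsmul_eq_mul]
    · intro y hy
      simp only [Finset.mem_filter, Finset.mem_univ, true_and, hS] at hy
      obtain ⟨hyS, hyf⟩ := hy
      have hyi₀ : y i₀ = false := by rw [← firstBit_eq hn y]; exact hyf
      set Ztrue := Z.filter (fun i => y i = true) with hZtrue
      have hZtsub : Ztrue ⊆ Z := Finset.filter_subset _ _
      have hcard : W + 1 ≤ Ztrue.card := by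
        have hsub : insert i₀ (Z \ Ztrue) ⊆ Finset.univ.filter (fun i => y i = false) := by
          intro i hi
          rcases Finset.mem_insert.mp hi with rfl | hiZ
          · simp [hyi₀]
          · obtain ⟨hiZ', hiZt⟩ := Finset.mem_sdiff.mp hiZ
            simp only [Finset.mem_filter, Finset.mem_univ, true_and]
            cases hyi : y i
            · rfl
            · exact absurd (Finset.mem_filter.mpr ⟨hiZ', hyi⟩) hiZt
        have hc := Finset.card_le_card hsub
        have hi₀sdiff : i₀ ∉ Z \ Ztrue := fun h => hi₀Z (Finset.mem_sdiff.mp h).1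
        rw [Finset.card_insert_of_notMem hi₀sdiff, Finset.card_sdiff_of_subset hZtsub, hZcard] at hc
        have hzy : (zeros y : ℤ) ≤ (j:ℤ) + w := hyS
        have hZtle : Ztrue.card ≤ j := le_trans (Finset.card_le_card hZtsub) (le_of_eq hZcard)
        unfold zeros at hzy
        omega
      obtain ⟨S', hS'sub, hS'card⟩ := Finset.exists_subset_card_eq hcard
      refine ⟨S', Finset.mem_powersetCard.mpr ⟨hS'sub.trans hZtsub, hS'card⟩, ?_⟩
      intro a ha
      rcases Finset.mem_insert.mp ha with rfl | haS'
      · rw [hyi₀, hxi₀]; simp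
      · have haZt := hS'sub haS'
        have hya : y a = true := (Finset.mem_filter.mp haZt).2
        have hxa : x a = false := (Finset.mem_filter.mp (hZtsub haZt)).2
        rw [hya, hxa]; simp
  -- KEY2 : lower bound on total accepted mass
  have key2 : (Nat.choose j W : ℝ) * ((1/n:ℝ)^W * (1-1/n:ℝ)^(n-1)) ≤ ∑ y ∈ S, mutEA x y := by
    have hq0 : (0:ℝ) ≤ 1 - 1/n := by
      have h1 : (1:ℝ) ≤ n := by exact_mod_cast hn
      have : 1/(n:ℝ) ≤ 1 := by rw [div_le_one hnr]; exact h1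
      linarith
    have himg : ∑ y ∈ (Finset.powersetCard W Z).image (flipSet x), mutEA x y
        ≥ (Nat.choose j W : ℝ) * ((1/n:ℝ)^W * (1-1/n:ℝ)^(n-1)) := by
      have hinj : ∀ S' ∈ Finset.powersetCard W Z, ∀ S'' ∈ Finset.powersetCard W Z,
          flipSet x S' = flipSet x S'' → S' = S'' := by
        intro S' hS' S'' hS'' heq
        have h1 : ∀ i ∈ S', x i = false := by
          intro i hi
          exact (Finset.mem_filter.mp ((Finset.mem_powersetCard.mp hS').1 hi)).2
        have h2 : ∀ i ∈ S'', x i = false := by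
          intro i hi
          exact (Finset.mem_filter.mp ((Finset.mem_powersetCard.mp hS'').1 hi)).2
        have := flipSet_diff x S' h1
        rw [heq, flipSet_diff x S'' h2] at this
        exact this.symm
      rw [Finset.sum_image hinj]
      have hval : ∀ S' ∈ Finset.powersetCard W Z,
          (1/n:ℝ)^W * (1-1/n:ℝ)^(n-1) ≤ mutEA x (flipSet x S') := by
        intro S' hS'
        obtain ⟨hsub, hcard⟩ := Finset.mem_powersetCard.mp hS'
        have hzero : ∀ i ∈ S', x i = false := fun i hi =>
          (Finset.mem_filter.mp (hsub hi)).2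
        rw [flipSet_mut hn x S' hzero, hcard]
        apply mul_le_mul_of_nonneg_left _ (by positivity)
        have hq1 : (1 - 1/(n:ℝ)) ≤ 1 := by
          have h0 : (0:ℝ) ≤ 1/n := by positivity
          linarith
        exact pow_le_pow_of_le_one hq0 hq1 (by omega)
      calc (Nat.choose j W : ℝ) * ((1/n:ℝ)^W * (1-1/n:ℝ)^(n-1))
          = ∑ _S' ∈ Finset.powersetCard W Z, (1/n:ℝ)^W * (1-1/n:ℝ)^(n-1) := by
            rw [Finset.sum_const, Finset.card_powersetCard, hZcard, nsmul_eq_mul]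
        _ ≤ ∑ S' ∈ Finset.powersetCard W Z, mutEA x (flipSet x S') :=
            Finset.sum_le_sum hval
    apply le_trans himg
    apply Finset.sum_le_sum_of_subset_of_nonneg
    · intro y hy
      obtain ⟨S', hS', rfl⟩ := Finset.mem_image.mp hy
      obtain ⟨hsub, hcard⟩ := Finset.mem_powersetCard.mp hS'
      have hzero : ∀ i ∈ S', x i = false := fun i hi =>
        (Finset.mem_filter.mp (hsub hi)).2
      have hz := flipSet_zeros x S' hzero
      rw [hcard] at hz
      simp only [hS, Finset.mem_filter, Finset.mem_univ, true_and]
      rw [hz]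
      omega
    · intro y _ _
      exact mutEA_nonneg hn x y
  -- choose inequality
  have hchoose : (Nat.choose j (W+1) : ℝ) ≤ (M:ℝ) * (Nat.choose j W : ℝ) := by
    have h1 : Nat.choose j (W+1) * (W+1) = Nat.choose j W * (j - W) :=
      Nat.choose_succ_right_eq j W
    have h2 : Nat.choose j (W+1) ≤ Nat.choose j (W+1) * (W+1) := by
      have : 1 ≤ W + 1 := by omega
      exact Nat.le_mul_of_pos_right _ (by omega)
    have h3 : Nat.choose j (W+1) ≤ M * Nat.choose j W := by
      rw [hM]
      calc Nat.choose j (W+1) ≤ Nat.choose j (W+1) * (W+1) := h2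
        _ = Nat.choose j W * (j - W) := h1
        _ = (j - W) * Nat.choose j W := by ring
    exact_mod_cast h3
  -- combine KEY1, KEY2, hchoose
  have hbad : ∑ y ∈ S.filter (fun y => firstBit y = false), mutEA x y
      ≤ (eu * M / n^2) * ∑ y ∈ S, mutEA x y := by
    have c1 : (Nat.choose j (W+1) : ℝ) * (1/n:ℝ)^(W+2)
        ≤ (M:ℝ) * (Nat.choose j W : ℝ) * (1/n:ℝ)^(W+2) := by
      apply mul_le_mul_of_nonneg_right hchoose (by positivity)
    have c2 : (M:ℝ) * (Nat.choose j W : ℝ) * (1/n:ℝ)^(W+2)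
        ≤ (eu * M / n^2) * ((Nat.choose j W : ℝ) * ((1/n:ℝ)^W * (1-1/n:ℝ)^(n-1))) := by
      have hexpand : (eu * M / n^2) * ((Nat.choose j W : ℝ) * ((1/n:ℝ)^W * (1-1/n:ℝ)^(n-1)))
          = ((M:ℝ) * (Nat.choose j W : ℝ) * (1/n:ℝ)^(W+2)) * (eu * (1-1/n:ℝ)^(n-1)) := by
        rw [pow_add]
        field_simp
      rw [hexpand]
      have h1 : (0:ℝ) ≤ (M:ℝ) * (Nat.choose j W : ℝ) * (1/n:ℝ)^(W+2) := by positivity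
      nlinarith [one_le_eu_q hn, h1]
    have c3 : (eu * M / n^2) * ((Nat.choose j W : ℝ) * ((1/n:ℝ)^W * (1-1/n:ℝ)^(n-1)))
        ≤ (eu * M / n^2) * ∑ y ∈ S, mutEA x y := by
      apply mul_le_mul_of_nonneg_left key2
      have h0 : (0:ℝ) ≤ (M:ℝ) := Nat.cast_nonneg _
      have := eu_pos
      positivity
    linarith [key1]
  -- final assembly
  have hsum0 : (0:ℝ) ≤ ∑ y ∈ S, mutEA x y :=
    Finset.sum_nonneg fun y _ => mutEA_nonneg hn x y
  calc ∑ y ∈ S, mutEA x y * phi w (x, y)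
      ≤ (∑ y ∈ S.filter (fun y => firstBit y = false), mutEA x y)
        + (eu * M / n) * ∑ y ∈ S, mutEA x y := step1
    _ ≤ (eu * M / n^2) * ∑ y ∈ S, mutEA x y + (eu * M / n) * ∑ y ∈ S, mutEA x y := by
        linarith [hbad]
    _ = (∑ y ∈ S, mutEA x y) * (eu * ((j:ℝ) + w) / n + eu * ((j:ℝ) + w) / n^2) := by
        rw [← hMreal]
        ring

/-! ### Superharmonicity of the potential -/

lemma fW_le_iff_zeros (w : ℤ) (x' x y : BitStr n) (h1 : firstBit x' = true)
    (h2 : firstBit x = true) :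
    (fW w x' x ≤ fW w x y) ↔ zeros y ≤ zeros x := by
  unfold fW
  rw [h1, h2]
  have hx := ones_add_zeros x
  have hy := ones_add_zeros y
  omega

lemma fW_le_iff_zeros' (w : ℤ) (x' x y : BitStr n) (h1 : firstBit x' = false)
    (h2 : firstBit x = true) :
    (fW w x' x ≤ fW w x y) ↔ (zeros y : ℤ) ≤ (zeros x : ℤ) + w := by
  unfold fW
  rw [h1, h2]
  have hx := ones_add_zeros x
  have hy := ones_add_zeros y
  simp only [Bool.false_eq_true, if_false, if_true, add_zero]
  omega

lemma eventIEA_of_small (hn : 0 < n) (w : ℤ) (u : TLState n) (h1 : firstBit u.1 = false)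
    (h2 : firstBit u.2 = true) (hne : u.2 ≠ allOnes n)
    (hsmall : (zeros u.2 : ℤ) ≤ -w - 1) : EventIEA w u := by
  refine ⟨h1, h2, hne, ?_⟩
  have ht := onesTail_int hn u.2 h2
  have hoz := ones_add_zeros u.2
  have hones : (ones u.2 : ℤ) + (zeros u.2 : ℤ) = n := by exact_mod_cast hoz
  omega

lemma sum_accept_split (hn : 0 < n) (w : ℤ) (u : TLState n) :
    (∑ y, if ¬ fW w u.1 u.2 ≤ fW w u.2 y then mutEA u.2 y else 0)
      = 1 - (∑ y, if fW w u.1 u.2 ≤ fW w u.2 y then mutEA u.2 y else 0) := by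
  have h := sum_mutEA hn u.2
  have : (∑ y, if fW w u.1 u.2 ≤ fW w u.2 y then mutEA u.2 y else 0)
      + (∑ y, if ¬ fW w u.1 u.2 ≤ fW w u.2 y then mutEA u.2 y else 0)
      = ∑ y : BitStr n, mutEA u.2 y := by
    rw [← Finset.sum_add_distrib]
    apply Finset.sum_congr rfl
    intro y _
    by_cases hc : fW w u.1 u.2 ≤ fW w u.2 y <;> simp [hc]
  linarith

lemma phi_superharmonic (hn : 0 < n) (w : ℤ) (hw2 : w ≤ -1) (u : TLState n)
    (hOpt : ¬ OptNeg u) (hG : ¬ (EventIEA w u ∨ EventII u)) :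
    ∑ t, transEA w u t * phi w t ≤ phi w u := by
  classical
  have hnr : (0:ℝ) < n := by exact_mod_cast hn
  have hmain := tlTrans_mul_sum mutEA w u (phi w)
  unfold transEA
  rw [hmain, sum_accept_split hn w u]
  set Aw := ∑ y, if fW w u.1 u.2 ≤ fW w u.2 y then mutEA u.2 y else 0 with hAw
  set A := ∑ y, if fW w u.1 u.2 ≤ fW w u.2 y then mutEA u.2 y * phi w (u.2, y) else 0 with hA
  -- le_one generic bound
  have hAw0 : 0 ≤ Aw := Finset.sum_nonneg fun y _ => by
    split <;> [exact mutEA_nonneg hn u.2 y; norm_num]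
  have hgen : A ≤ Aw * 1 := by
    rw [mul_one, hA, hAw]
    apply Finset.sum_le_sum
    intro y _
    split
    · nlinarith [phi_le_one hn w (u.2, y), mutEA_nonneg hn u.2 y,
        phi_nonneg hn w (u.2, y)]
    · norm_num
  have hfilter : ∀ (g : BitStr n → ℝ),
      (∑ y, if fW w u.1 u.2 ≤ fW w u.2 y then g y else 0)
        = ∑ y ∈ Finset.univ.filter (fun y => fW w u.1 u.2 ≤ fW w u.2 y), g y :=
    fun g => (Finset.sum_filter _ _).symm
  suffices hsuff : A ≤ Aw * phi w u by
    have hle1 := phi_le_one hn w u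
    have hge0 := phi_nonneg hn w u
    nlinarith [hsuff]
  -- case analysis
  by_cases hx2 : firstBit u.2 = false
  · -- phi u = 1
    have hphi : phi w u = 1 := by
      unfold phi
      rw [if_neg (ne_allOnes_of_firstBit_false hn u.2 hx2), if_pos hx2]
    rw [hphi]; exact hgen
  · have hx2t : firstBit u.2 = true := by
      cases h : firstBit u.2
      · exact absurd h hx2
      · rfl
    by_cases hall : u.2 = allOnes n
    · exfalso
      cases h1 : firstBit u.1
      · exact hOpt ⟨hall, h1⟩
      · exact hG (Or.inr ⟨h1, hall⟩)
    · by_cases hx1 : firstBit u.1 = true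
      · -- class 4
        have hphi : phi w u = min 1 (eu * zeros u.2 / n) := by
          unfold phi
          rw [if_neg hall, if_neg hx2, if_pos hx1]
        rw [hphi]
        rcases le_or_gt (eu * (zeros u.2 : ℝ) / n) 1 with hmin | hmin
        · rw [min_eq_right hmin]
          have hiff : ∀ y, (fW w u.1 u.2 ≤ fW w u.2 y) ↔ zeros y ≤ zeros u.2 :=
            fun y => fW_le_iff_zeros w u.1 u.2 y hx1 hx2t
          have hAeq : A = ∑ y ∈ Finset.univ.filter (fun y : BitStr n => zeros y ≤ zeros u.2),
              mutEA u.2 y * phi w (u.2, y) := by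
            rw [hA, hfilter]
            congr 1
            apply Finset.filter_congr
            intro y _
            simp [hiff y]
          have hAweq : Aw = ∑ y ∈ Finset.univ.filter
              (fun y : BitStr n => zeros y ≤ zeros u.2), mutEA u.2 y := by
            rw [hAw, hfilter]
            congr 1
            apply Finset.filter_congr
            intro y _
            simp [hiff y]
          rw [hAeq, hAweq]
          exact class4_core hn w u.2 hx2t
        · rw [min_eq_left hmin.le]
          exact hgen
      · -- class 3
        have hx1f : firstBit u.1 = false := by
          cases h : firstBit u.1
          · rfl
          · exact absurd h hx1
        have hjW : -w ≤ (zeros u.2 : ℤ) := by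
          by_contra hno
          push_neg at hno
          exact hG (Or.inl (eventIEA_of_small hn w u hx1f hx2t hall (by omega)))
        have hphi : phi w u = min 1 (eu * ((zeros u.2 : ℝ) + w) / n
            + eu * ((zeros u.2 : ℝ) + w) / n^2) := by
          unfold phi
          rw [if_neg hall, if_neg hx2, if_neg hx1, if_neg (by omega)]
        rw [hphi]
        rcases le_or_gt (eu * ((zeros u.2 : ℝ) + w) / n
            + eu * ((zeros u.2 : ℝ) + w) / n^2) 1 with hmin | hmin
        · rw [min_eq_right hmin]
          have hiff : ∀ y, (fW w u.1 u.2 ≤ fW w u.2 y) ↔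
              (zeros y : ℤ) ≤ (zeros u.2 : ℤ) + w :=
            fun y => fW_le_iff_zeros' w u.1 u.2 y hx1f hx2t
          have hAeq : A = ∑ y ∈ Finset.univ.filter
              (fun y : BitStr n => (zeros y : ℤ) ≤ (zeros u.2 : ℤ) + w),
              mutEA u.2 y * phi w (u.2, y) := by
            rw [hA, hfilter]
            congr 1
            apply Finset.filter_congr
            intro y _
            simp [hiff y]
          have hAweq : Aw = ∑ y ∈ Finset.univ.filter
              (fun y : BitStr n => (zeros y : ℤ) ≤ (zeros u.2 : ℤ) + w), mutEA u.2 y := by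
            rw [hAw, hfilter]
            congr 1
            apply Finset.filter_congr
            intro y _
            simp [hiff y]
          rw [hAeq, hAweq]
          exact class3_core hn w hw2 u.2 hx2t hjW
        · rw [min_eq_left hmin.le]
          exact hgen

/-! ### One-step reachability of the goal/optimum set -/

lemma mut_allOnes_lb (hn : 2 ≤ n) (x : BitStr n) : ((1:ℝ)/n)^n ≤ mutEA x (allOnes n) := by
  have hn0 : 0 < n := by omega
  have hnr : (0:ℝ) < n := by exact_mod_cast hn0
  unfold mutEA
  rw [hamming_allOnes x]
  have hz := zeros_le x
  have hp : (0:ℝ) ≤ 1/n := by positivity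
  have hpq : (1:ℝ)/n ≤ 1 - 1/n := by
    have h2 : (2:ℝ) ≤ n := by exact_mod_cast hn
    rw [div_le_iff₀ hnr, sub_mul, div_mul_cancel₀]
    · linarith
    · linarith
  calc ((1:ℝ)/n)^n = ((1:ℝ)/n)^(zeros x) * ((1:ℝ)/n)^(n - zeros x) := by
        rw [← pow_add]
        congr 1
        omega
    _ ≤ ((1:ℝ)/n)^(zeros x) * (1 - 1/n)^(n - zeros x) := by
        apply mul_le_mul_of_nonneg_left _ (by positivity)
        exact pow_le_pow_left₀ hp hpq _

lemma accept_allOnes (hn : 0 < n) (w : ℤ) (hw2 : w ≤ -1) (u : TLState n)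
    (hOpt : ¬ OptNeg u) (hG : ¬ (EventIEA w u ∨ EventII u)) :
    fW w u.1 u.2 ≤ fW w u.2 (allOnes n) := by
  have hones : ones (allOnes n) = n := by
    have h0 : zeros (allOnes n) = 0 := (zeros_eq_zero_iff (allOnes n)).mpr rfl
    have := ones_add_zeros (allOnes n)
    omega
  have hleq : (ones u.2 : ℤ) ≤ (n : ℤ) := by exact_mod_cast ones_le u.2
  unfold fW
  rw [hones]
  cases hx2 : firstBit u.2
  · simp only [Bool.false_eq_true, if_false, add_zero]
    cases hx1 : firstBit u.1
    · simp only [Bool.false_eq_true, if_false, add_zero]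
      exact hleq
    · simp only [if_true]
      omega
  · simp only [if_true]
    cases hx1 : firstBit u.1
    · simp only [Bool.false_eq_true, if_false, add_zero]
      by_cases hall : u.2 = allOnes n
      · exact absurd ⟨hall, hx1⟩ hOpt
      · have hjW : -w ≤ (zeros u.2 : ℤ) := by
          by_contra hno
          push_neg at hno
          exact hG (Or.inl (eventIEA_of_small hn w u hx1 hx2 hall (by omega)))
        have hoz := ones_add_zeros u.2
        have hoz' : (ones u.2 : ℤ) + (zeros u.2 : ℤ) = n := by exact_mod_cast hoz
        omega
    · simp only [if_true]
      omega

lemma transEA_allOnes_lb (hn : 2 ≤ n) (w : ℤ) (hw2 : w ≤ -1) (u : TLState n)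
    (hOpt : ¬ OptNeg u) (hG : ¬ (EventIEA w u ∨ EventII u)) :
    ((1:ℝ)/n)^n ≤ transEA w u (u.2, allOnes n) := by
  have hn0 : 0 < n := by omega
  unfold transEA tlTrans
  have h1 : ((1:ℝ)/n)^n ≤ ∑ y : BitStr n,
      if fW w u.1 u.2 ≤ fW w u.2 y ∧ (u.2, allOnes n) = (u.2, y) then mutEA u.2 y else 0 := by
    have hterm : ((1:ℝ)/n)^n ≤ (if fW w u.1 u.2 ≤ fW w u.2 (allOnes n)
        ∧ (u.2, allOnes n) = (u.2, allOnes n) then mutEA u.2 (allOnes n) else 0) := by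
      rw [if_pos ⟨accept_allOnes hn0 w hw2 u hOpt hG, rfl⟩]
      exact mut_allOnes_lb hn u.2
    apply hterm.trans
    apply Finset.single_le_sum (f := fun y => if fW w u.1 u.2 ≤ fW w u.2 y
        ∧ (u.2, allOnes n) = (u.2, y) then mutEA u.2 y else 0)
      (fun y _ => by split <;> [exact mutEA_nonneg hn0 u.2 y; norm_num])
      (Finset.mem_univ (allOnes n))
  have h2 : (0:ℝ) ≤ if (u.2, allOnes n) = u then
      ∑ y : BitStr n, if ¬ fW w u.1 u.2 ≤ fW w u.2 y then mutEA u.2 y else 0 else 0 := by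
    split
    · exact Finset.sum_nonneg fun y _ => by split <;> [exact mutEA_nonneg hn0 u.2 y; norm_num]
    · norm_num
  linarith

end Stmt11Aux

/-- Let `c ∈ (0, 1/2)` and `-n ≤ w ≤ -1`. If the
time-linkage RLS or (1+1) EA on `f_w` is at a non-optimal state `(x', x)` with
fewer than `n^c` zero-bits in the current solution and with first bit pattern
`(0, 1)` (as is the situation when it first arrives below `n^c` zeros without
having reached the global optimum), then with probability at least
`1 - e/n^{2-c} - 1/n^{1-2c} - (n-1)·e^{-n^c/e}`, Event I or Event II occurs at
some (possibly later) time. -/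
theorem stmt11 (n : ℕ) (hn : 1 ≤ n) (c : ℝ) (hc : c ∈ Set.Ioo (0 : ℝ) (1 / 2))
    (w : ℤ) (hw1 : -(n : ℤ) ≤ w) (hw2 : w ≤ -1)
    (s : TLState n) (hzeros : (zeros s.2 : ℝ) < (n : ℝ) ^ c)
    (hnopt : ¬ OptNeg s)
    (h1 : firstBit s.1 = false) (h2 : firstBit s.2 = true) :
    hitProb (transEA w) (fun t => EventIEA w t ∨ EventII t) s ≥
      1 - eu / (n : ℝ) ^ (2 - c) - 1 / (n : ℝ) ^ (1 - 2 * c) -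
        ((n : ℝ) - 1) * Real.exp (-(n : ℝ) ^ c / eu) ∧
    hitProb (transRLS w) (fun t => EventIRLS t ∨ EventII t) s ≥
      1 - eu / (n : ℝ) ^ (2 - c) - 1 / (n : ℝ) ^ (1 - 2 * c) -
        ((n : ℝ) - 1) * Real.exp (-(n : ℝ) ^ c / eu) := by
  classical
  open Stmt11Aux in
  have hn0 : 0 < n := hn
  have hnr : (0:ℝ) < n := by exact_mod_cast hn0
  have hxne : s.2 ≠ allOnes n := fun h => hnopt ⟨h, h1⟩
  have hn2 : 2 ≤ n := by
    rcases Nat.lt_or_ge n 2 with h | h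
    · exfalso
      apply hxne
      funext i
      have hi : i = ⟨0, hn0⟩ := by
        apply Fin.ext
        have := i.isLt
        omega
      rw [hi, ← firstBit_eq hn0 s.2, h2]
      rfl
    · exact h
  have heu : (0:ℝ) < eu := eu_pos
  have hc1 : (0:ℝ) < c := hc.1
  have hc2 : c < 1/2 := hc.2
  have hT : (0:ℝ) < (n:ℝ)^c := Real.rpow_pos_of_pos hnr c
  have heps1 : (0:ℝ) ≤ eu / (n:ℝ)^(2-c) := by
    apply div_nonneg heu.le (Real.rpow_pos_of_pos hnr _).le
  have heps2 : (0:ℝ) ≤ 1 / (n:ℝ)^(1-2*c) := by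
    apply div_nonneg (by norm_num) (Real.rpow_pos_of_pos hnr _).le
  have heps3 : (0:ℝ) ≤ ((n:ℝ)-1) * Real.exp (-(n:ℝ)^c / eu) := by
    apply mul_nonneg _ (Real.exp_pos _).le
    have : (1:ℝ) ≤ n := by exact_mod_cast hn
    linarith
  -- transition kernel facts
  have hP0 : ∀ u t : TLState n, 0 ≤ transEA w u t :=
    fun u t => tlTrans_nonneg mutEA (mutEA_nonneg hn0) w u t
  have hP1 : ∀ u : TLState n, ∑ t, transEA w u t = 1 :=
    fun u => sum_tlTrans mutEA (fun x => sum_mutEA hn0 x) w u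
  have hQ0 : ∀ u t : TLState n, 0 ≤ transRLS w u t :=
    fun u t => tlTrans_nonneg mutRLS (mutRLS_nonneg hn0) w u t
  have hQ1 : ∀ u : TLState n, ∑ t, transRLS w u t = 1 :=
    fun u => sum_tlTrans mutRLS (fun x => sum_mutRLS hn0 x) w u
  constructor
  · -- EA part
    set G : TLState n → Prop := fun t => EventIEA w t ∨ EventII t with hG
    by_cases hsmall : (zeros s.2 : ℤ) ≤ -w - 1
    · -- Event I already holds at s
      have hGs : G s := Or.inl (eventIEA_of_small hn0 w s h1 h2 hxne hsmall)
      have h01 : hitWithin (transEA w) G 0 s = 1 := hitWithin_eq_one_of 0 s hGs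
      have hle := hitProb_ge_hitWithin (P := transEA w) (E := G) hP0 hP1 0 s
      rw [h01] at hle
      linarith
    · push_neg at hsmall
      have hjW : -w ≤ (zeros s.2 : ℤ) := by omega
      -- race bounded by potential
      have hrace : ∀ T, raceWithin (transEA w) OptNeg G T s ≤ phi w s := fun T =>
        raceWithin_le_phi hP0 (phi w) (phi_nonneg hn0 w)
          (fun t ht => le_of_eq (phi_opt hn0 w t ht).symm)
          (fun t hA hB => phi_superharmonic hn0 w hw2 t hA hB) T s
      -- geometric reach of G ∪ Opt
      set q₀ : ℝ := ((1:ℝ)/n)^n with hq₀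
      have hq₀pos : 0 < q₀ := by positivity
      have hq₀le : q₀ ≤ 1 := by
        apply pow_le_one₀ (by positivity)
        rw [div_le_one hnr]
        exact_mod_cast hn
      have hstep : ∀ u : TLState n, ¬ (G u ∨ OptNeg u) →
          ∃ t, (G t ∨ OptNeg t) ∧ q₀ ≤ transEA w u t := by
        intro u hu
        push_neg at hu
        refine ⟨(u.2, allOnes n), ?_, transEA_allOnes_lb hn2 w hw2 u hu.2 hu.1⟩
        cases hx2 : firstBit u.2
        · exact Or.inr ⟨rfl, hx2⟩
        · exact Or.inl (Or.inr ⟨hx2, rfl⟩)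
      have hgeom := hitWithin_geom (E := fun t => G t ∨ OptNeg t) hP0 hP1 q₀ hq₀pos hq₀le hstep
      have hunion := hitWithin_union_le (E := G) (A := OptNeg) hP0
      have hbound : ∀ T, 1 - (1-q₀)^T - phi w s ≤ hitProb (transEA w) G s := by
        intro T
        have h1' := hgeom T s
        have h2' := hunion T s
        have h3' := hrace T
        have h4' := hitProb_ge_hitWithin (P := transEA w) (E := G) hP0 hP1 T s
        linarith
      have htend : Filter.Tendsto (fun T : ℕ => 1 - (1-q₀)^T - phi w s)
          Filter.atTop (nhds (1 - 0 - phi w s)) := by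
        apply Filter.Tendsto.sub _ tendsto_const_nhds
        apply Filter.Tendsto.const_sub
        exact tendsto_pow_atTop_nhds_zero_of_lt_one (by linarith) (by linarith)
      have hhit : 1 - 0 - phi w s ≤ hitProb (transEA w) G s :=
        le_of_tendsto htend (Filter.Eventually.of_forall hbound)
      -- bound the potential at s
      have hx1false : ¬ firstBit s.1 = true := by rw [h1]; simp
      have hx2false : ¬ firstBit s.2 = false := by rw [h2]; simp
      have hphis : phi w s ≤ eu * ((zeros s.2 : ℝ) + w)/n + eu * ((zeros s.2 : ℝ) + w)/n^2 := by
        unfold Stmt11Aux.phi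
        rw [if_neg hxne, if_neg hx2false, if_neg hx1false, if_neg (by omega)]
        exact min_le_right _ _
      -- numeric estimates
      set K : ℝ := (zeros s.2 : ℝ) with hK
      set T : ℝ := (n:ℝ)^c with hTT
      have hKT : K < T := hzeros
      have hm0 : 0 ≤ K + w := by
        have : ((-w : ℤ):ℝ) ≤ ((zeros s.2 : ℤ):ℝ) := by exact_mod_cast hjW
        push_cast at this
        rw [hK]
        linarith
      have hw2r : (w:ℝ) ≤ -1 := by exact_mod_cast hw2
      have hmT : K + w ≤ T - 1 := by linarith
      have heulb : eu < 2.7182818286 := by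
        rw [eu]
        exact Real.exp_one_lt_d9
      -- (b) : eu*(K+w)/n ≤ 1/n^(1-2c)
      have hb : eu * (K + w)/n ≤ 1 / (n:ℝ)^(1-2*c) := by
        have hrw : (1:ℝ) / (n:ℝ)^(1-2*c) = T^2 / n := by
          rw [hTT]
          rw [show (1:ℝ) - 2*c = 1 - 2*c from rfl]
          rw [Real.rpow_sub hnr]
          rw [Real.rpow_one]
          have h2c : (n:ℝ)^(2*c) = ((n:ℝ)^c)^2 := by
            rw [two_mul, Real.rpow_add hnr]
            ring
          rw [h2c]
          field_simp
        rw [hrw]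
        apply (div_le_div_iff_of_pos_right hnr).mpr
        nlinarith [sq_nonneg (2*T - eu), mul_pos heu (by linarith : (0:ℝ) < 4 - eu),
          mul_le_mul_of_nonneg_left hmT heu.le]
      -- (a) : eu*(K+w)/n² ≤ eu/n^(2-c)
      have ha : eu * (K + w)/n^2 ≤ eu / (n:ℝ)^(2-c) := by
        have hrw : eu / (n:ℝ)^(2-c) = eu * T / n^2 := by
          rw [hTT, Real.rpow_sub hnr]
          have h2 : (n:ℝ)^(2:ℝ) = (n:ℝ)^2 := by
            rw [show (2:ℝ) = ((2:ℕ):ℝ) by norm_num, Real.rpow_natCast]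
          rw [h2]
          field_simp
        rw [hrw]
        apply (div_le_div_iff_of_pos_right (by positivity)).mpr
        have : K + w ≤ T := by linarith
        nlinarith [heu.le]
      calc hitProb (transEA w) G s ≥ 1 - 0 - phi w s := hhit
        _ ≥ 1 - (eu * (K + w)/n + eu * (K + w)/n^2) := by
            rw [hK] at hphis
            linarith
        _ ≥ 1 - eu / (n:ℝ)^(2-c) - 1/(n:ℝ)^(1-2*c)
            - ((n:ℝ)-1) * Real.exp (-(n:ℝ)^c/eu) := by linarith
  · -- RLS part
    set G : TLState n → Prop := fun t => EventIRLS t ∨ EventII t with hG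
    have hGs : G s := Or.inl ⟨h1, h2, hxne⟩
    have h01 : hitWithin (transRLS w) G 0 s = 1 := hitWithin_eq_one_of 0 s hGs
    have hle := hitProb_ge_hitWithin (P := transRLS w) (E := G) hQ0 hQ1 0 s
    rw [h01] at hle
    linarith
end

section
/- Let b ∈ (0, 1/2) be a constant and let w ∈ ℤ with w ≥ 2. Suppose the time-linkage RLS or (1+1) EA on f_w starts from a state (x',x) with x'_1 = 1, x_1 = 0, and |x| ≥ b·n, and set k = |x_{[2..n]}|. Then: (i) for the RLS, Event III holds at the start and the RLS never reaches the global optimum; (ii) for the (1+1) EA, if k ≥ n − w + 1 then Event III holds at the start and the (1+1) EA never reaches the global optimum; (iii) otherwise the (1+1) EA reaches the global optimum before Event III happens with probability at least (1 − 1/n)·e^{−(1−b)e−1}, and moreover the expected number of generations until the (1+1) EA reaches the global optimum is at least (w/((1−b)e))^w. -/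
open scoped Classical BigOperators ENNReal

namespace TL
variable {n : ℕ}

lemma ones_le (x : BitStr n) : ones x ≤ n := by
  classical
  simpa [ones] using (Finset.card_filter_le Finset.univ _).trans (by simp)

lemma hamming_le (x y : BitStr n) : hamming x y ≤ n := by
  simpa [hamming] using (Finset.card_filter_le Finset.univ _).trans (by simp)

lemma ones_allOnes : ones (allOnes n) = n := by
  simp [ones, allOnes]

lemma firstBit_eq (x : BitStr n) (hn : 0 < n) : firstBit x = x ⟨0, hn⟩ := by
  simp [firstBit, hn]

lemma firstBit_allOnes (hn : 0 < n) : firstBit (allOnes n) = true := by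
  simp [firstBit_eq _ hn, allOnes]

lemma eq_allOnes_of_ones (x : BitStr n) (h : ones x = n) : x = allOnes n := by
  have h2 : (Finset.univ.filter fun i => x i = true) = Finset.univ := by
    apply Finset.eq_univ_of_card
    simpa [ones] using h
  funext i
  have hi : i ∈ Finset.univ.filter fun i => x i = true := by rw [h2]; exact Finset.mem_univ i
  simpa [allOnes] using (Finset.mem_filter.1 hi).2

lemma ones_split (x : BitStr n) (hn : 0 < n) :
    ones x = onesTail x + (if x ⟨0, hn⟩ then 1 else 0) := by
  classical
  have := Finset.card_filter_add_card_filter_not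
    (s := Finset.univ.filter fun i : Fin n => x i = true)
    (p := fun i : Fin n => (i : ℕ) ≠ 0)
  rw [Finset.filter_filter, Finset.filter_filter] at this
  have h1 : (Finset.univ.filter fun i : Fin n => x i = true ∧ ¬ (i:ℕ) ≠ 0)
      = if x ⟨0, hn⟩ then {(⟨0, hn⟩ : Fin n)} else ∅ := by
    ext j
    by_cases hx : x ⟨0, hn⟩ = true
    · simp only [hx, if_true, Finset.mem_filter, Finset.mem_univ, true_and,
        Finset.mem_singleton, not_not]
      constructor
      · rintro ⟨hj1, hj2⟩; exact Fin.ext hj2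
      · rintro rfl; exact ⟨hx, rfl⟩
    · simp only [Bool.not_eq_true] at hx
      simp only [hx, Finset.mem_filter, Finset.mem_univ, true_and, not_not]
      constructor
      · rintro ⟨hj1, hj2⟩
        have : j = ⟨0, hn⟩ := Fin.ext hj2
        rw [this, hx] at hj1; cases hj1
      · intro hj; simp at hj
  rw [h1] at this
  by_cases hx : x ⟨0, hn⟩ = true
  · simp only [hx, if_true] at this ⊢
    simp only [Finset.card_singleton] at this
    have honesT : onesTail x = (Finset.univ.filter fun i : Fin n => x i = true ∧ (i:ℕ) ≠ 0).card := rfl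
    have hones : ones x = (Finset.univ.filter fun i : Fin n => x i = true).card := rfl
    omega
  · simp only [Bool.not_eq_true] at hx
    simp only [hx, Bool.false_eq_true, if_false] at this ⊢
    simp only [Finset.card_empty] at this
    have honesT : onesTail x = (Finset.univ.filter fun i : Fin n => x i = true ∧ (i:ℕ) ≠ 0).card := rfl
    have hones : ones x = (Finset.univ.filter fun i : Fin n => x i = true).card := rfl
    omega

lemma ones_eq_onesTail (x : BitStr n) (hn : 0 < n) (h : firstBit x = false) :
    ones x = onesTail x := by
  have := ones_split x hn
  rw [firstBit_eq x hn] at h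
  simp [h] at this; omega

lemma ones_eq_onesTail_add_one (x : BitStr n) (hn : 0 < n) (h : firstBit x = true) :
    ones x = onesTail x + 1 := by
  have := ones_split x hn
  rw [firstBit_eq x hn] at h
  simp [h] at this; omega

lemma ones_le_ones_add_hamming (x y : BitStr n) : ones y ≤ ones x + hamming x y := by
  classical
  have hsub : (Finset.univ.filter fun i => y i = true) ⊆
      (Finset.univ.filter fun i => x i = true) ∪ (Finset.univ.filter fun i => x i ≠ y i) := by
    intro i hi
    simp only [Finset.mem_filter, Finset.mem_univ, true_and] at hi
    simp only [Finset.mem_union, Finset.mem_filter, Finset.mem_univ, true_and]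
    by_cases hx : x i = true
    · exact Or.inl hx
    · right; rw [hi]; simpa using hx
  calc ones y ≤ _ := Finset.card_le_card hsub
  _ ≤ _ := Finset.card_union_le _ _

lemma one_div_nonneg' (hn : 0 < n) : (0:ℝ) ≤ 1 / n := by positivity

lemma one_sub_nonneg' (hn : 0 < n) : (0:ℝ) ≤ 1 - 1 / n := by
  have h1 : (1:ℝ) ≤ n := by exact_mod_cast hn
  have h2 : (1:ℝ)/n ≤ 1 := by
    rw [div_le_one (by linarith)]; exact h1
  linarith

lemma mutEA_nonneg (hn : 0 < n) (x y : BitStr n) : 0 ≤ mutEA x y :=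
  mul_nonneg (pow_nonneg (one_div_nonneg' hn) _) (pow_nonneg (one_sub_nonneg' hn) _)

lemma mutEA_pos (hn : 2 ≤ n) (x y : BitStr n) : 0 < mutEA x y := by
  have h1 : (0:ℝ) < 1 / n := by positivity
  have h2 : (0:ℝ) < 1 - 1 / n := by
    have : (2:ℝ) ≤ n := by exact_mod_cast hn
    have h3 : (1:ℝ)/n ≤ 1/2 := by
      apply div_le_div_of_nonneg_left <;> linarith
    linarith
  exact mul_pos (pow_pos h1 _) (pow_pos h2 _)

lemma mutEA_eq_prod (x y : BitStr n) :
    mutEA x y = ∏ i, (if y i = x i then (1 - 1/(n:ℝ)) else 1/(n:ℝ)) := by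
  classical
  rw [← Finset.prod_filter_mul_prod_filter_not Finset.univ (fun i => y i = x i)]
  have h1 : ∀ i ∈ Finset.univ.filter fun i => y i = x i,
      (if y i = x i then (1 - 1/(n:ℝ)) else 1/(n:ℝ)) = 1 - 1/(n:ℝ) := by
    intro i hi; simp only [Finset.mem_filter] at hi; simp [hi.2]
  have h2 : ∀ i ∈ Finset.univ.filter fun i => ¬ y i = x i,
      (if y i = x i then (1 - 1/(n:ℝ)) else 1/(n:ℝ)) = 1/(n:ℝ) := by
    intro i hi; simp only [Finset.mem_filter] at hi; simp [hi.2]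
  rw [Finset.prod_congr rfl h1, Finset.prod_congr rfl h2, Finset.prod_const, Finset.prod_const]
  have hcard : (Finset.univ.filter fun i => ¬ y i = x i).card = hamming x y := by
    unfold hamming
    congr 1
    apply Finset.filter_congr
    intro i _
    constructor
    · intro h; exact fun hh => h hh.symm
    · intro h; exact fun hh => h hh.symm
  have hcard2 : (Finset.univ.filter fun i => y i = x i).card = n - hamming x y := by
    have := Finset.card_filter_add_card_filter_not
      (s := (Finset.univ : Finset (Fin n))) (p := fun i => y i = x i)
    simp only [Finset.card_univ, Fintype.card_fin] at this
    omega
  rw [hcard, hcard2, mutEA, mul_comm]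

lemma sum_mutEA (hn : 0 < n) (x : BitStr n) : ∑ y : BitStr n, mutEA x y = 1 := by
  classical
  have : ∀ y : BitStr n, mutEA x y = ∏ i, (if y i = x i then (1 - 1/(n:ℝ)) else 1/(n:ℝ)) :=
    mutEA_eq_prod x
  rw [Finset.sum_congr rfl (fun y _ => this y)]
  have := Finset.prod_univ_sum (fun _ : Fin n => (Finset.univ : Finset Bool))
    (fun i b => if b = x i then (1 - 1/(n:ℝ)) else 1/(n:ℝ))
  rw [Fintype.piFinset_univ] at this
  rw [← this]
  have : ∀ i : Fin n, (∑ b : Bool, if b = x i then (1 - 1/(n:ℝ)) else 1/(n:ℝ)) = 1 := by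
    intro i
    cases hxi : x i <;> simp [hxi] <;> ring
  rw [Finset.prod_congr rfl (fun i _ => this i)]
  simp

lemma sum_mutEA_cond (hn : 0 < n) (x : BitStr n) (S : Finset (Fin n)) :
    ∑ y : BitStr n, (if (∀ i ∈ S, y i ≠ x i) then mutEA x y else 0)
      = (1/(n:ℝ)) ^ S.card := by
  classical
  have key : ∀ y : BitStr n, (if (∀ i ∈ S, y i ≠ x i) then mutEA x y else 0)
      = ∏ i, (if i ∈ S ∧ y i = x i then 0 else
          (if y i = x i then (1 - 1/(n:ℝ)) else 1/(n:ℝ))) := by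
    intro y
    by_cases hc : ∀ i ∈ S, y i ≠ x i
    · rw [if_pos hc, mutEA_eq_prod]
      apply Finset.prod_congr rfl
      intro i _
      by_cases hiS : i ∈ S
      · have := hc i hiS
        simp [this, hiS]
      · simp [hiS]
    · rw [if_neg hc]
      push_neg at hc
      obtain ⟨i0, hi0S, hi0⟩ := hc
      refine (Finset.prod_eq_zero (Finset.mem_univ i0) ?_).symm
      simp [hi0S, hi0]
  rw [Finset.sum_congr rfl (fun y _ => key y)]
  have := Finset.prod_univ_sum (fun _ : Fin n => (Finset.univ : Finset Bool))
    (fun i b => if i ∈ S ∧ b = x i then 0 else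
          (if b = x i then (1 - 1/(n:ℝ)) else 1/(n:ℝ)))
  rw [Fintype.piFinset_univ] at this
  rw [← this]
  have hfac : ∀ i : Fin n, (∑ b : Bool, if i ∈ S ∧ b = x i then 0 else
      (if b = x i then (1 - 1/(n:ℝ)) else 1/(n:ℝ)))
      = if i ∈ S then 1/(n:ℝ) else 1 := by
    intro i
    by_cases hiS : i ∈ S
    · cases hxi : x i <;> simp [hiS, hxi]
    · cases hxi : x i <;> simp [hiS, hxi] <;> ring
  rw [Finset.prod_congr rfl (fun i _ => hfac i)]
  rw [Finset.prod_ite_mem, Finset.prod_const]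
  congr 1
  simp

end TL

namespace TL

lemma sum_trans_mul (m : BitStr n → BitStr n → ℝ) (w : ℤ) (s : TLState n) (g : TLState n → ℝ) :
    ∑ t : TLState n, tlTrans m w s t * g t
      = ∑ y : BitStr n, m s.2 y *
          (if fW w s.1 s.2 ≤ fW w s.2 y then g (s.2, y) else g s) := by
  classical
  unfold tlTrans
  simp only [add_mul, Finset.sum_add_distrib]
  have h1 : ∑ t : TLState n,
      (∑ y : BitStr n, if fW w s.1 s.2 ≤ fW w s.2 y ∧ t = (s.2, y) then m s.2 y else 0) * g t
      = ∑ y : BitStr n, (if fW w s.1 s.2 ≤ fW w s.2 y then m s.2 y * g (s.2, y) else 0) := by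
    rw [Finset.sum_congr rfl (fun t _ => Finset.sum_mul _ _ _)]
    rw [Finset.sum_comm]
    apply Finset.sum_congr rfl
    intro y _
    by_cases hacc : fW w s.1 s.2 ≤ fW w s.2 y
    · simp only [hacc, true_and, if_pos]
      rw [Finset.sum_congr rfl (fun t _ => by rw [ite_mul, zero_mul] :
        ∀ t ∈ Finset.univ, (if t = (s.2, y) then m s.2 y else 0) * g t
          = if t = (s.2, y) then m s.2 y * g t else 0)]
      rw [Finset.sum_ite_eq' Finset.univ ((s.2, y) : TLState n) (fun t => m s.2 y * g t)]
      simp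
    · simp [hacc]
  have h2 : ∑ t : TLState n,
      (if t = s then ∑ y : BitStr n,
        if ¬ fW w s.1 s.2 ≤ fW w s.2 y then m s.2 y else 0 else 0) * g t
      = ∑ y : BitStr n, (if ¬ fW w s.1 s.2 ≤ fW w s.2 y then m s.2 y * g s else 0) := by
    rw [Finset.sum_congr rfl (fun t _ => by rw [ite_mul, zero_mul] :
      ∀ t ∈ Finset.univ, (if t = s then (∑ y : BitStr n,
          if ¬ fW w s.1 s.2 ≤ fW w s.2 y then m s.2 y else 0) else 0) * g t
        = if t = s then (∑ y : BitStr n,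
            if ¬ fW w s.1 s.2 ≤ fW w s.2 y then m s.2 y else 0) * g t else 0)]
    rw [Finset.sum_ite_eq' Finset.univ s]
    simp only [Finset.mem_univ, if_pos]
    rw [Finset.sum_mul]
    apply Finset.sum_congr rfl
    intro y _
    by_cases hacc : fW w s.1 s.2 ≤ fW w s.2 y <;> simp [hacc]
  rw [h1, h2, ← Finset.sum_add_distrib]
  apply Finset.sum_congr rfl
  intro y _
  by_cases hacc : fW w s.1 s.2 ≤ fW w s.2 y <;> simp [hacc]

lemma tlTrans_nonneg (m : BitStr n → BitStr n → ℝ) (w : ℤ) (s t : TLState n)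
    (hm : ∀ y, 0 ≤ m s.2 y) : 0 ≤ tlTrans m w s t := by
  unfold tlTrans
  apply add_nonneg
  · apply Finset.sum_nonneg; intro y _; by_cases h : fW w s.1 s.2 ≤ fW w s.2 y ∧ t = (s.2, y)
    · simp only [h, if_pos]; exact hm y
    · simp [h]
  · by_cases h : t = s
    · simp only [h, if_pos]
      apply Finset.sum_nonneg; intro y _
      by_cases h2 : ¬ fW w s.1 s.2 ≤ fW w s.2 y
      · simp only [h2, if_pos]; exact hm y
      · simp [h2]
    · simp [h]

lemma sum_tlTrans (m : BitStr n → BitStr n → ℝ) (w : ℤ) (s : TLState n)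
    (hm1 : ∑ y : BitStr n, m s.2 y = 1) :
    ∑ t : TLState n, tlTrans m w s t = 1 := by
  have := sum_trans_mul m w s (fun _ => 1)
  simp only [mul_one, ite_self] at this
  rw [this, hm1]

lemma hitWithin_nonneg (P : TLState n → TLState n → ℝ) (E : TLState n → Prop)
    (hP0 : ∀ t u, 0 ≤ P t u) : ∀ T t, 0 ≤ hitWithin P E T t := by
  intro T
  induction T with
  | zero => intro t; by_cases h : E t <;> simp [hitWithin, h]
  | succ T ih =>
    intro t
    by_cases h : E t
    · simp [hitWithin, h]
    · simp only [hitWithin, h, if_neg, not_false_iff]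
      exact Finset.sum_nonneg fun u _ => mul_nonneg (hP0 t u) (ih u)

lemma hitWithin_le_one (P : TLState n → TLState n → ℝ) (E : TLState n → Prop)
    (hP0 : ∀ t u, 0 ≤ P t u) (hP1 : ∀ t, ∑ u : TLState n, P t u = 1) :
    ∀ T t, hitWithin P E T t ≤ 1 := by
  intro T
  induction T with
  | zero => intro t; by_cases h : E t <;> simp [hitWithin, h]
  | succ T ih =>
    intro t
    by_cases h : E t
    · simp [hitWithin, h]
    · simp only [hitWithin, h, if_neg, not_false_iff]
      calc ∑ u : TLState n, P t u * hitWithin P E T u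
          ≤ ∑ u : TLState n, P t u * 1 :=
            Finset.sum_le_sum fun u _ => mul_le_mul_of_nonneg_left (ih u) (hP0 t u)
        _ = 1 := by simp [hP1 t]

lemma hitWithin_mono (P : TLState n → TLState n → ℝ) (E : TLState n → Prop)
    (hP0 : ∀ t u, 0 ≤ P t u) :
    ∀ T t, hitWithin P E T t ≤ hitWithin P E (T+1) t := by
  intro T
  induction T with
  | zero =>
    intro t
    by_cases h : E t
    · simp [hitWithin, h]
    · simp only [hitWithin, h, if_neg, not_false_iff]
      exact Finset.sum_nonneg fun u _ => mul_nonneg (hP0 t u)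
        (hitWithin_nonneg P E hP0 0 u)
  | succ T ih =>
    intro t
    by_cases h : E t
    · simp [hitWithin, h]
    · simp only [hitWithin, h, if_neg, not_false_iff]
      exact Finset.sum_le_sum fun u _ => mul_le_mul_of_nonneg_left (ih u) (hP0 t u)

lemma hitWithin_absorbed (m : BitStr n → BitStr n → ℝ) (w : ℤ) (E : TLState n → Prop)
    (s : TLState n) (hm : ∀ y, fW w s.1 s.2 ≤ fW w s.2 y → m s.2 y = 0)
    (hE : ¬ E s) : ∀ T, hitWithin (tlTrans m w) E T s = 0 := by
  intro T
  induction T with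
  | zero => simp [hitWithin, hE]
  | succ T ih =>
    simp only [hitWithin, hE, if_neg, not_false_iff]
    rw [sum_trans_mul m w s (hitWithin (tlTrans m w) E T)]
    apply Finset.sum_eq_zero
    intro y _
    by_cases hacc : fW w s.1 s.2 ≤ fW w s.2 y
    · rw [hm y hacc, zero_mul]
    · rw [if_neg hacc, ih, mul_zero]

lemma hitProb_absorbed (m : BitStr n → BitStr n → ℝ) (w : ℤ) (E : TLState n → Prop)
    (s : TLState n) (hm : ∀ y, fW w s.1 s.2 ≤ fW w s.2 y → m s.2 y = 0)
    (hE : ¬ E s) : hitProb (tlTrans m w) E s = 0 := by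
  unfold hitProb
  rw [iSup_congr (hitWithin_absorbed m w E s hm hE)]
  exact ciSup_const

lemma fW_true {w : ℤ} {x : BitStr n} (y : BitStr n) (h : firstBit x = true) :
    fW w x y = (ones y : ℤ) + w := by simp [fW, h]

lemma fW_false {w : ℤ} {x : BitStr n} (y : BitStr n) (h : firstBit x = false) :
    fW w x y = (ones y : ℤ) := by simp [fW, h]

end TL

namespace TL2
open TL
variable {n : ℕ}

lemma not_optPos {s : TLState n} (hn : 0 < n) (h2 : firstBit s.2 = false) : ¬ OptPos s := by
  rintro ⟨ha, _⟩
  rw [ha, firstBit_allOnes hn] at h2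
  cases h2

lemma part_i (hn : 0 < n) (w : ℤ) (hw : 2 ≤ w) (s : TLState n)
    (h1 : firstBit s.1 = true) (h2 : firstBit s.2 = false) :
    hitProb (transRLS w) (OptPos (n := n)) s = 0 := by
  apply hitProb_absorbed
  · intro y hacc
    rw [fW_true s.2 h1, fW_false y h2] at hacc
    unfold mutRLS
    rw [if_neg]
    intro hham
    have h3 := ones_le_ones_add_hamming s.2 y
    rw [hham] at h3
    omega
  · exact not_optPos hn h2

lemma part_ii (hn : 0 < n) (w : ℤ) (hw : 2 ≤ w) (s : TLState n)
    (h1 : firstBit s.1 = true) (h2 : firstBit s.2 = false)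
    (hk : (n : ℤ) - w + 1 ≤ (onesTail s.2 : ℤ)) :
    hitProb (transEA w) (OptPos (n := n)) s = 0 := by
  apply hitProb_absorbed
  · intro y hacc
    rw [fW_true s.2 h1, fW_false y h2] at hacc
    exfalso
    have hky : ones s.2 = onesTail s.2 := ones_eq_onesTail s.2 hn h2
    have h3 := ones_le y
    omega
  · exact not_optPos hn h2

lemma zeros_card (x : BitStr n) :
    (Finset.univ.filter fun i => x i = false).card = n - ones x := by
  classical
  have := Finset.card_filter_add_card_filter_not
    (s := (Finset.univ : Finset (Fin n))) (p := fun i : Fin n => x i = true)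
  simp only [Finset.card_univ, Fintype.card_fin] at this
  have h2 : (Finset.univ.filter fun i : Fin n => ¬ x i = true)
      = Finset.univ.filter fun i : Fin n => x i = false := by
    apply Finset.filter_congr; intro i _; simp
  rw [h2] at this
  unfold ones; omega

lemma accq_le_choose (hn : 0 < n) (w : ℤ) (hw : 2 ≤ w) (s : TLState n)
    (h1 : firstBit s.1 = true) (h2 : firstBit s.2 = false) :
    (∑ y : BitStr n, if fW w s.1 s.2 ≤ fW w s.2 y then mutEA s.2 y else 0)
      ≤ ((n - ones s.2).choose w.toNat : ℝ) * (1/(n:ℝ)) ^ w.toNat := by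
  classical
  set x := s.2 with hx
  set w' := w.toNat with hw'
  set Zx := Finset.univ.filter fun i => x i = false with hZx
  have hZcard : Zx.card = n - ones x := zeros_card x
  have step1 : ∀ y : BitStr n, (if fW w s.1 s.2 ≤ fW w s.2 y then mutEA x y else 0)
      ≤ ∑ S ∈ Finset.powersetCard w' Zx,
          (if (∀ i ∈ S, y i ≠ x i) then mutEA x y else 0) := by
    intro y
    by_cases hacc : fW w s.1 s.2 ≤ fW w s.2 y
    · rw [if_pos hacc]
      rw [fW_true x h1, fW_false y h2] at hacc
      set D := Finset.univ.filter fun i => x i = false ∧ y i = true with hD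
      have hsub : (Finset.univ.filter fun i => y i = true) ⊆
          (Finset.univ.filter fun i => x i = true) ∪ D := by
        intro i hi
        simp only [Finset.mem_filter, Finset.mem_univ, true_and] at hi
        simp only [hD, Finset.mem_union, Finset.mem_filter, Finset.mem_univ, true_and]
        by_cases hxi : x i = true
        · exact Or.inl hxi
        · exact Or.inr ⟨by simpa using hxi, hi⟩
      have hcardD : w' ≤ D.card := by
        have hy : ones y ≤ ones x + D.card := by
          calc ones y ≤ _ := Finset.card_le_card hsub
          _ ≤ _ := Finset.card_union_le _ _
        have hwn : (w' : ℤ) = w := Int.toNat_of_nonneg (by linarith)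
        omega
      obtain ⟨S0, hS0sub, hS0card⟩ := Finset.exists_subset_card_eq hcardD
      have hS0mem : S0 ∈ Finset.powersetCard w' Zx := by
        rw [Finset.mem_powersetCard]
        refine ⟨hS0sub.trans ?_, hS0card⟩
        intro i hi
        simp only [hD, Finset.mem_filter] at hi
        simp only [hZx, Finset.mem_filter]
        exact ⟨hi.1, hi.2.1⟩
      have hterm : (if (∀ i ∈ S0, y i ≠ x i) then mutEA x y else 0) = mutEA x y := by
        rw [if_pos]
        intro i hi
        have := hS0sub hi
        simp only [hD, Finset.mem_filter] at this
        rw [this.2.1, this.2.2]; simp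
      refine le_trans (le_of_eq hterm.symm) (Finset.single_le_sum
        (f := fun S : Finset (Fin n) => if ∀ i ∈ S, y i ≠ x i then mutEA x y else 0) ?_ hS0mem)
      intro S _
      by_cases hc : (∀ i ∈ S, y i ≠ x i)
      · exact le_of_le_of_eq (mutEA_nonneg hn x y) (if_pos hc).symm
      · exact le_of_eq (if_neg hc).symm
    · rw [if_neg hacc]
      apply Finset.sum_nonneg
      intro S _
      by_cases hc : (∀ i ∈ S, y i ≠ x i)
      · exact le_of_le_of_eq (mutEA_nonneg hn x y) (if_pos hc).symm
      · exact le_of_eq (if_neg hc).symm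
  calc (∑ y : BitStr n, if fW w s.1 s.2 ≤ fW w s.2 y then mutEA x y else 0)
      ≤ ∑ y : BitStr n, ∑ S ∈ Finset.powersetCard w' Zx,
          (if (∀ i ∈ S, y i ≠ x i) then mutEA x y else 0) :=
        Finset.sum_le_sum fun y _ => step1 y
    _ = ∑ S ∈ Finset.powersetCard w' Zx, ∑ y : BitStr n,
          (if (∀ i ∈ S, y i ≠ x i) then mutEA x y else 0) := Finset.sum_comm
    _ = ∑ S ∈ Finset.powersetCard w' Zx, (1/(n:ℝ)) ^ S.card :=
        Finset.sum_congr rfl fun S _ => sum_mutEA_cond hn x S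
    _ = ∑ S ∈ Finset.powersetCard w' Zx, (1/(n:ℝ)) ^ w' := by
        apply Finset.sum_congr rfl
        intro S hS
        rw [(Finset.mem_powersetCard.1 hS).2]
    _ = (Finset.powersetCard w' Zx).card * (1/(n:ℝ)) ^ w' := by
        rw [Finset.sum_const, nsmul_eq_mul]
    _ = ((n - ones x).choose w' : ℝ) * (1/(n:ℝ)) ^ w' := by
        rw [Finset.card_powersetCard, hZcard]

lemma pow_self_le_exp (w' : ℕ) : ((w':ℝ))^w' / (w'.factorial : ℝ) ≤ Real.exp w' := by
  have h := Real.sum_le_exp_of_nonneg (x := (w' : ℝ)) (by positivity) (w'+1)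
  refine le_trans ?_ h
  refine Finset.single_le_sum (f := fun i => ((w':ℝ))^i / (i.factorial : ℝ)) ?_ ?_
  · intro i _; positivity
  · simp

lemma real_chain (z : ℕ) (hn : 0 < n) (w' : ℕ) (hw' : 1 ≤ w') (b : ℝ)
    (hb0 : 0 < b) (hb1 : b < 1) (hz : (z:ℝ) ≤ (1-b)*n) :
    (z.choose w' : ℝ) * (1/(n:ℝ))^w' ≤ ((1-b)*eu/(w':ℝ))^w' := by
  have hnR : (0:ℝ) < n := by exact_mod_cast hn
  have hwR : (0:ℝ) < w' := by exact_mod_cast hw'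
  have hfac : (0:ℝ) < (w'.factorial : ℝ) := by exact_mod_cast w'.factorial_pos
  have h1 : (z.choose w' : ℝ) ≤ (z:ℝ)^w' / (w'.factorial : ℝ) := Nat.choose_le_pow_div w' z
  have hzn : (z:ℝ)/n ≤ 1 - b := by
    rw [div_le_iff₀ hnR]; linarith
  have heu : eu^w' = Real.exp w' := by
    rw [eu, ← Real.exp_nat_mul, mul_one]
  have hexp : ((w':ℝ))^w' / (w'.factorial : ℝ) ≤ eu^w' := by
    rw [heu]; exact pow_self_le_exp w'
  have hinv : 1 / (w'.factorial : ℝ) ≤ eu^w' / ((w':ℝ))^w' := by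
    rw [div_le_div_iff₀ hfac (by positivity)]
    calc 1 * ((w':ℝ))^w' = ((w':ℝ))^w' := one_mul _
      _ ≤ eu^w' * (w'.factorial : ℝ) := by
          rw [← div_le_iff₀ hfac] at *
          exact hexp
  calc (z.choose w' : ℝ) * (1/(n:ℝ))^w'
      ≤ ((z:ℝ)^w' / (w'.factorial : ℝ)) * (1/(n:ℝ))^w' :=
        mul_le_mul_of_nonneg_right h1 (by positivity)
    _ = ((z:ℝ)/n)^w' * (1 / (w'.factorial : ℝ)) := by
        rw [div_pow, one_pow, div_pow]; ring
    _ ≤ (1-b)^w' * (eu^w' / ((w':ℝ))^w') := by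
        apply mul_le_mul (pow_le_pow_left₀ (by positivity) hzn w') hinv (by positivity)
          (pow_nonneg (by linarith) _)
    _ = ((1-b)*eu/(w':ℝ))^w' := by
        rw [div_pow, mul_pow]; ring

lemma part_iii_exp (hn2 : 2 ≤ n) (w : ℤ) (hw : 2 ≤ w) (s : TLState n)
    (h1 : firstBit s.1 = true) (h2 : firstBit s.2 = false)
    (b : ℝ) (hb0 : 0 < b) (hb1 : b < 1) (hones : b * n ≤ (ones s.2 : ℝ)) :
    ENNReal.ofReal (((w:ℝ) / ((1 - b) * eu)) ^ w)
      ≤ expHitTime (transEA w) (OptPos (n:=n)) s := by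
  classical
  have hn : 0 < n := by omega
  set q := ∑ y : BitStr n, if fW w s.1 s.2 ≤ fW w s.2 y then mutEA s.2 y else 0 with hqdef
  have hq0 : 0 ≤ q := Finset.sum_nonneg fun y _ => by
    by_cases hc : fW w s.1 s.2 ≤ fW w s.2 y
    · rw [if_pos hc]; exact mutEA_nonneg hn _ _
    · rw [if_neg hc]
  have htot : q + (∑ y : BitStr n, if ¬ fW w s.1 s.2 ≤ fW w s.2 y then mutEA s.2 y else 0)
      = 1 := by
    rw [hqdef, ← Finset.sum_add_distrib, ← sum_mutEA hn s.2]
    apply Finset.sum_congr rfl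
    intro y _
    by_cases hc : fW w s.1 s.2 ≤ fW w s.2 y <;> simp [hc]
  have hqbar0 : 0 ≤ ∑ y : BitStr n,
      if ¬ fW w s.1 s.2 ≤ fW w s.2 y then mutEA s.2 y else 0 := by
    apply Finset.sum_nonneg
    intro y _
    by_cases hc : ¬ fW w s.1 s.2 ≤ fW w s.2 y
    · rw [if_pos hc]; exact mutEA_nonneg hn _ _
    · rw [if_neg hc]
  have hq1 : q ≤ 1 := by linarith
  have hP0 : ∀ t u, 0 ≤ transEA (n:=n) w t u :=
    fun t u => tlTrans_nonneg mutEA w t u (fun y => mutEA_nonneg hn _ _)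
  have hP1 : ∀ t : TLState n, ∑ u : TLState n, transEA w t u = 1 :=
    fun t => sum_tlTrans mutEA w t (sum_mutEA hn _)
  have hstep : ∀ T, (1-q)^T ≤ 1 - hitWithin (transEA w) (OptPos (n:=n)) T s := by
    intro T
    induction T with
    | zero => simp [hitWithin, not_optPos hn h2]
    | succ T ih =>
      have hrec : hitWithin (transEA w) (OptPos (n:=n)) (T+1) s
          = ∑ y : BitStr n, mutEA s.2 y * (if fW w s.1 s.2 ≤ fW w s.2 y
              then hitWithin (transEA w) (OptPos (n:=n)) T (s.2, y)
              else hitWithin (transEA w) (OptPos (n:=n)) T s) := by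
        show (if OptPos s then (1:ℝ) else _) = _
        rw [if_neg (not_optPos hn h2)]
        exact sum_trans_mul mutEA w s _
      have hub : hitWithin (transEA w) (OptPos (n:=n)) (T+1) s
          ≤ q + (1-q) * hitWithin (transEA w) (OptPos (n:=n)) T s := by
        rw [hrec]
        have hb1' : ∀ y : BitStr n, mutEA s.2 y * (if fW w s.1 s.2 ≤ fW w s.2 y
              then hitWithin (transEA w) (OptPos (n:=n)) T (s.2, y)
              else hitWithin (transEA w) (OptPos (n:=n)) T s)
            ≤ (if fW w s.1 s.2 ≤ fW w s.2 y then mutEA s.2 y else 0)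
              + (if ¬ fW w s.1 s.2 ≤ fW w s.2 y then mutEA s.2 y else 0)
                * hitWithin (transEA w) (OptPos (n:=n)) T s := by
          intro y
          by_cases hc : fW w s.1 s.2 ≤ fW w s.2 y
          · simp only [hc, if_pos, not_true, if_neg, if_true]
            simp only [not_true_eq_false, if_false, zero_mul, add_zero]
            calc mutEA s.2 y * hitWithin (transEA w) (OptPos (n:=n)) T (s.2, y)
                ≤ mutEA s.2 y * 1 := mul_le_mul_of_nonneg_left
                  (hitWithin_le_one _ _ hP0 hP1 T _) (mutEA_nonneg hn _ _)
              _ = mutEA s.2 y := mul_one _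
          · simp only [hc, if_neg, not_false_iff, if_pos, if_false]
            simp only [if_true, zero_add]
            exact le_rfl
        calc ∑ y : BitStr n, mutEA s.2 y * (if fW w s.1 s.2 ≤ fW w s.2 y
              then hitWithin (transEA w) (OptPos (n:=n)) T (s.2, y)
              else hitWithin (transEA w) (OptPos (n:=n)) T s)
            ≤ ∑ y : BitStr n, ((if fW w s.1 s.2 ≤ fW w s.2 y then mutEA s.2 y else 0)
              + (if ¬ fW w s.1 s.2 ≤ fW w s.2 y then mutEA s.2 y else 0)
                * hitWithin (transEA w) (OptPos (n:=n)) T s) :=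
              Finset.sum_le_sum fun y _ => hb1' y
          _ = q + (1-q) * hitWithin (transEA w) (OptPos (n:=n)) T s := by
              rw [Finset.sum_add_distrib, ← Finset.sum_mul, ← hqdef]
              have : (∑ y : BitStr n,
                  if ¬ fW w s.1 s.2 ≤ fW w s.2 y then mutEA s.2 y else 0) = 1 - q := by
                linarith
              rw [this]
      have hmul : (1-q)*(1-q)^T
          ≤ (1-q)*(1 - hitWithin (transEA w) (OptPos (n:=n)) T s) :=
        mul_le_mul_of_nonneg_left ih (by linarith)
      calc (1-q)^(T+1) = (1-q)*(1-q)^T := by ring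
        _ ≤ (1-q)*(1 - hitWithin (transEA w) (OptPos (n:=n)) T s) := hmul
        _ ≤ 1 - hitWithin (transEA w) (OptPos (n:=n)) (T+1) s := by nlinarith [hub]
  have hones_le : ones s.2 ≤ n := ones_le s.2
  have hz : ((n - ones s.2 : ℕ) : ℝ) ≤ (1-b)*n := by
    rw [Nat.cast_sub hones_le]
    have : (0:ℝ) ≤ n := by positivity
    nlinarith
  have hw1 : 1 ≤ w.toNat := by omega
  have hqB : q ≤ ((1-b)*eu/(w.toNat:ℝ))^w.toNat :=
    le_trans (accq_le_choose hn w hw s h1 h2)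
      (real_chain (n - ones s.2) hn w.toNat hw1 b hb0 hb1 hz)
  have hwcast : ((w.toNat : ℕ):ℝ) = (w:ℝ) := by
    exact_mod_cast congrArg (Int.cast : ℤ → ℝ) (Int.toNat_of_nonneg (by linarith))
  rw [hwcast] at hqB
  have heu_pos : (0:ℝ) < eu := Real.exp_pos 1
  have hwRpos : (0:ℝ) < (w:ℝ) := by exact_mod_cast (by linarith : (0:ℤ) < w)
  have hBpos : (0:ℝ) < (1-b)*eu/(w:ℝ) := by
    apply div_pos (mul_pos (by linarith) heu_pos) hwRpos
  have hBpow_pos : (0:ℝ) < ((1-b)*eu/(w:ℝ))^w.toNat := pow_pos hBpos _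
  have hzpow : ((w:ℝ) / ((1 - b) * eu)) ^ w = (((1-b)*eu/(w:ℝ))^w.toNat)⁻¹ := by
    have hwz : w = (w.toNat : ℤ) := (Int.toNat_of_nonneg (by linarith)).symm
    have h8 : ((w.toNat:ℤ):ℝ) = (w:ℝ) := by exact_mod_cast hwz.symm
    conv_lhs => rw [hwz]
    rw [zpow_natCast]
    rw [show (((w.toNat:ℤ)):ℝ) = (w:ℝ) from h8]
    rw [← inv_pow, inv_div]
  calc ENNReal.ofReal (((w:ℝ) / ((1 - b) * eu)) ^ w)
      = (ENNReal.ofReal (((1-b)*eu/(w:ℝ))^w.toNat))⁻¹ := by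
        rw [hzpow]; exact ENNReal.ofReal_inv_of_pos hBpow_pos
    _ ≤ (ENNReal.ofReal q)⁻¹ := ENNReal.inv_le_inv' (ENNReal.ofReal_le_ofReal hqB)
    _ ≤ (1 - ENNReal.ofReal (1-q))⁻¹ := by
        apply ENNReal.inv_le_inv'
        rw [tsub_le_iff_right]
        calc (1:ℝ≥0∞) = ENNReal.ofReal (q + (1-q)) := by norm_num
          _ ≤ ENNReal.ofReal q + ENNReal.ofReal (1-q) := ENNReal.ofReal_add_le
    _ = ∑' T : ℕ, (ENNReal.ofReal (1-q))^T := (ENNReal.tsum_geometric _).symm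
    _ = ∑' T : ℕ, ENNReal.ofReal ((1-q)^T) := by
        apply tsum_congr
        intro T
        rw [ENNReal.ofReal_pow (by linarith)]
    _ ≤ expHitTime (transEA w) (OptPos (n:=n)) s :=
        ENNReal.tsum_le_tsum fun T => ENNReal.ofReal_le_ofReal (hstep T)

lemma raceWithin_nonneg (P : TLState n → TLState n → ℝ) (A B : TLState n → Prop)
    (hP0 : ∀ t u, 0 ≤ P t u) : ∀ T t, 0 ≤ raceWithin P A B T t := by
  intro T
  induction T with
  | zero => intro t; by_cases h : A t <;> simp [raceWithin, h]
  | succ T ih =>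
    intro t
    by_cases h : A t
    · simp [raceWithin, h]
    · by_cases h2 : B t
      · simp [raceWithin, h, h2]
      · simp only [raceWithin, h, h2, if_neg, not_false_iff, if_false]
        exact Finset.sum_nonneg fun u _ => mul_nonneg (hP0 t u) (ih u)

lemma raceWithin_le_one (P : TLState n → TLState n → ℝ) (A B : TLState n → Prop)
    (hP0 : ∀ t u, 0 ≤ P t u) (hP1 : ∀ t, ∑ u : TLState n, P t u = 1) :
    ∀ T t, raceWithin P A B T t ≤ 1 := by
  intro T
  induction T with
  | zero => intro t; by_cases h : A t <;> simp [raceWithin, h]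
  | succ T ih =>
    intro t
    by_cases h : A t
    · simp [raceWithin, h]
    · by_cases h2 : B t
      · simp [raceWithin, h, h2]
      · simp only [raceWithin, h, h2, if_neg, not_false_iff, if_false]
        calc ∑ u : TLState n, P t u * raceWithin P A B T u
            ≤ ∑ u : TLState n, P t u * 1 :=
              Finset.sum_le_sum fun u _ => mul_le_mul_of_nonneg_left (ih u) (hP0 t u)
          _ = 1 := by simp [hP1 t]

lemma raceWithin_mono (P : TLState n → TLState n → ℝ) (A B : TLState n → Prop)
    (hP0 : ∀ t u, 0 ≤ P t u) :
    ∀ T t, raceWithin P A B T t ≤ raceWithin P A B (T+1) t := by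
  intro T
  induction T with
  | zero =>
    intro t
    by_cases h : A t
    · simp [raceWithin, h]
    · by_cases h2 : B t
      · simp [raceWithin, h, h2]
      · simp only [raceWithin, h, h2, if_neg, not_false_iff, if_false]
        exact Finset.sum_nonneg fun u _ =>
          mul_nonneg (hP0 t u) (raceWithin_nonneg P A B hP0 0 u)
  | succ T ih =>
    intro t
    by_cases h : A t
    · simp [raceWithin, h]
    · by_cases h2 : B t
      · simp [raceWithin, h, h2]
      · simp only [raceWithin, h, h2, if_neg, not_false_iff, if_false]
        exact Finset.sum_le_sum fun u _ => mul_le_mul_of_nonneg_left (ih u) (hP0 t u)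

lemma raceWithin_monotone (P : TLState n → TLState n → ℝ) (A B : TLState n → Prop)
    (hP0 : ∀ t u, 0 ≤ P t u) (t : TLState n) :
    Monotone (fun T => raceWithin P A B T t) :=
  monotone_nat_of_le_succ (fun T => raceWithin_mono P A B hP0 T t)

lemma raceWithin_bdd (P : TLState n → TLState n → ℝ) (A B : TLState n → Prop)
    (hP0 : ∀ t u, 0 ≤ P t u) (hP1 : ∀ t, ∑ u : TLState n, P t u = 1) (t : TLState n) :
    BddAbove (Set.range fun T => raceWithin P A B T t) := by
  refine ⟨1, ?_⟩
  rintro r ⟨T, rfl⟩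
  exact raceWithin_le_one P A B hP0 hP1 T t

lemma raceProb_tendsto (P : TLState n → TLState n → ℝ) (A B : TLState n → Prop)
    (hP0 : ∀ t u, 0 ≤ P t u) (hP1 : ∀ t, ∑ u : TLState n, P t u = 1) (t : TLState n) :
    Filter.Tendsto (fun T => raceWithin P A B T t) Filter.atTop
      (nhds (raceProb P A B t)) :=
  tendsto_atTop_ciSup (raceWithin_monotone P A B hP0 t) (raceWithin_bdd P A B hP0 hP1 t)

lemma raceProb_nonneg (P : TLState n → TLState n → ℝ) (A B : TLState n → Prop)
    (hP0 : ∀ t u, 0 ≤ P t u) (hP1 : ∀ t, ∑ u : TLState n, P t u = 1) (t : TLState n) :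
    0 ≤ raceProb P A B t :=
  le_trans (raceWithin_nonneg P A B hP0 0 t)
    (le_ciSup (raceWithin_bdd P A B hP0 hP1 t) 0)

lemma raceProb_of_A (P : TLState n → TLState n → ℝ) (A B : TLState n → Prop)
    (t : TLState n) (hA : A t) : raceProb P A B t = 1 := by
  unfold raceProb
  have : ∀ T, raceWithin P A B T t = 1 := by
    intro T
    cases T with
    | zero => simp [raceWithin, hA]
    | succ T => simp [raceWithin, hA]
  rw [iSup_congr this]
  exact ciSup_const

lemma raceProb_rec (hn : 0 < n) (w : ℤ) (A B : TLState n → Prop) (t : TLState n)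
    (hA : ¬ A t) (hB : ¬ B t) :
    raceProb (transEA w) A B t = ∑ y : BitStr n, mutEA t.2 y *
      (if fW w t.1 t.2 ≤ fW w t.2 y then raceProb (transEA w) A B (t.2, y)
       else raceProb (transEA w) A B t) := by
  have hP0 : ∀ t' u : TLState n, 0 ≤ transEA w t' u :=
    fun t' u => tlTrans_nonneg mutEA w t' u (fun y => mutEA_nonneg hn _ _)
  have hP1 : ∀ t' : TLState n, ∑ u : TLState n, transEA w t' u = 1 :=
    fun t' => sum_tlTrans mutEA w t' (sum_mutEA hn _)
  have hrec : ∀ T, raceWithin (transEA w) A B (T+1) t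
      = ∑ y : BitStr n, mutEA t.2 y *
        (if fW w t.1 t.2 ≤ fW w t.2 y then raceWithin (transEA w) A B T (t.2, y)
         else raceWithin (transEA w) A B T t) := by
    intro T
    show (if A t then (1:ℝ) else if B t then 0 else _) = _
    rw [if_neg hA, if_neg hB]
    exact sum_trans_mul mutEA w t _
  have hL : Filter.Tendsto (fun T => raceWithin (transEA w) A B (T+1) t)
      Filter.atTop (nhds (raceProb (transEA w) A B t)) :=
    (raceProb_tendsto (transEA w) A B hP0 hP1 t).comp (Filter.tendsto_add_atTop_nat 1)
  have hR : Filter.Tendsto (fun T => ∑ y : BitStr n, mutEA t.2 y *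
      (if fW w t.1 t.2 ≤ fW w t.2 y then raceWithin (transEA w) A B T (t.2, y)
       else raceWithin (transEA w) A B T t)) Filter.atTop
      (nhds (∑ y : BitStr n, mutEA t.2 y *
        (if fW w t.1 t.2 ≤ fW w t.2 y then raceProb (transEA w) A B (t.2, y)
         else raceProb (transEA w) A B t))) := by
    apply tendsto_finset_sum
    intro y _
    by_cases hacc : fW w t.1 t.2 ≤ fW w t.2 y
    · simp only [hacc, if_pos]
      exact (raceProb_tendsto (transEA w) A B hP0 hP1 (t.2, y)).const_mul _
    · simp only [hacc, if_neg, not_false_iff, if_false]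
      exact (raceProb_tendsto (transEA w) A B hP0 hP1 t).const_mul _
  exact tendsto_nhds_unique (hL.congr (fun T => hrec T)) hR

lemma ones_update (y : BitStr n) (i0 : Fin n) (hy : y i0 = false) :
    ones (Function.update y i0 true) = ones y + 1 := by
  classical
  have hset : (Finset.univ.filter fun i => Function.update y i0 true i = true)
      = insert i0 (Finset.univ.filter fun i => y i = true) := by
    ext j
    simp only [Finset.mem_filter, Finset.mem_univ, true_and, Finset.mem_insert]
    by_cases hj : j = i0
    · subst hj; simp [Function.update_self]
    · simp [Function.update_of_ne hj, hj]
  have hnot : i0 ∉ (Finset.univ.filter fun i => y i = true) := by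
    simp [hy]
  unfold ones
  rw [hset, Finset.card_insert_of_notMem hnot]

lemma hamming_update (v y : BitStr n) (i0 : Fin n) (hv : v i0 = true) (hy : y i0 = false) :
    hamming v y = hamming v (Function.update y i0 true) + 1 := by
  classical
  have hset : (Finset.univ.filter fun i => v i ≠ y i)
      = insert i0 (Finset.univ.filter fun i => v i ≠ Function.update y i0 true i) := by
    ext j
    simp only [Finset.mem_filter, Finset.mem_univ, true_and, Finset.mem_insert]
    by_cases hj : j = i0
    · subst hj; simp [hv, hy]
    · simp [Function.update_of_ne hj, hj]
  have hnot : i0 ∉ (Finset.univ.filter fun i => v i ≠ Function.update y i0 true i) := by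
    simp [hv]
  unfold hamming
  rw [hset, Finset.card_insert_of_notMem hnot]

lemma mutEA_flip (hn : 0 < n) (v y y' : BitStr n)
    (h : hamming v y = hamming v y' + 1) :
    mutEA v y' = ((n:ℝ) - 1) * mutEA v y := by
  have hle : hamming v y ≤ n := hamming_le v y
  have hnR : (n:ℝ) ≠ 0 := by positivity
  set h' := hamming v y' with hh'
  have h2 : n - h' = (n - (h' + 1)) + 1 := by omega
  unfold mutEA
  rw [h, h2, ← hh', pow_succ, pow_succ]
  have : (1 - 1/(n:ℝ)) = ((n:ℝ) - 1) * (1/(n:ℝ)) := by field_simp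
  rw [this]
  ring

lemma fW_le_top (w : ℤ) (hw : 0 ≤ w) (u v : BitStr n) : fW w u v ≤ (n:ℤ) + w := by
  unfold fW
  have h1 : (ones v : ℤ) ≤ n := by exact_mod_cast ones_le v
  have h2 : (if firstBit u then w else 0) ≤ w := by
    by_cases h : firstBit u <;> simp [h, hw]
  omega

lemma optPos_of_F (hn : 0 < n) (w : ℤ) (hw : 2 ≤ w) (t : TLState n)
    (hF : (n:ℤ) + w ≤ fW w t.1 t.2) : OptPos t := by
  have h1 : (ones t.2 : ℤ) ≤ n := by exact_mod_cast ones_le t.2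
  by_cases hfb : firstBit t.1 = true
  · constructor
    · apply eq_allOnes_of_ones
      have : fW w t.1 t.2 = (ones t.2 : ℤ) + w := by simp [fW, hfb]
      rw [this] at hF
      have : (n : ℤ) ≤ (ones t.2 : ℤ) := by omega
      omega
    · exact hfb
  · exfalso
    simp only [Bool.not_eq_true] at hfb
    have : fW w t.1 t.2 = (ones t.2 : ℤ) := by simp [fW, hfb]
    omega

lemma fW_optPos (hn : 0 < n) (w : ℤ) (t : TLState n) (hA : OptPos t) :
    fW w t.1 t.2 = (n:ℤ) + w := by
  obtain ⟨h1, h2⟩ := hA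
  rw [fW, h1, ones_allOnes, h2, if_pos rfl]

lemma B_not_safe (hn : 0 < n) (w : ℤ) (hw : 2 ≤ w) (t : TLState n)
    (hB : EventIIIEA w t) : ¬ (fW w t.1 t.2 ≤ (n:ℤ) ∨ firstBit t.2 = true) := by
  obtain ⟨e1, e2, e3⟩ := hB
  rintro (hF | hfb)
  · have h1 : fW w t.1 t.2 = (ones t.2 : ℤ) + w := by simp [fW, e1]
    have h2 : ones t.2 = onesTail t.2 := ones_eq_onesTail t.2 hn e2
    rw [h1, h2] at hF
    omega
  · rw [e2] at hfb; cases hfb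

lemma fW_allOnes (w : ℤ) (v : BitStr n) :
    fW w v (allOnes n) = (n:ℤ) + (if firstBit v then w else 0) := by
  unfold fW; rw [ones_allOnes]

set_option maxHeartbeats 1000000 in
lemma race_step (hn2 : 2 ≤ n) (w : ℤ) (hw : 2 ≤ w) (d : ℕ) (ℓ : ℤ)
    (hℓ : ℓ = (n:ℤ) + w - (d+1))
    (ih : ∀ t : TLState n, (fW w t.1 t.2 ≤ (n:ℤ) ∨ firstBit t.2 = true) →
      (n:ℤ) + w - fW w t.1 t.2 ≤ d →
      (1 - 1/(n:ℝ))^d ≤ raceProb (transEA w) (OptPos (n:=n)) (EventIIIEA w) t)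
    (t1 : TLState n)
    (ht1Safe : fW w t1.1 t1.2 ≤ (n:ℤ) ∨ firstBit t1.2 = true)
    (ht1F : fW w t1.1 t1.2 = ℓ)
    (ht1min : ∀ t' : TLState n,
      ((fW w t'.1 t'.2 ≤ (n:ℤ) ∨ firstBit t'.2 = true) ∧ fW w t'.1 t'.2 = ℓ) →
      raceProb (transEA w) (OptPos (n:=n)) (EventIIIEA w) t1
        ≤ raceProb (transEA w) (OptPos (n:=n)) (EventIIIEA w) t')
    (y1 : BitStr n) (hy1a : fW w t1.1 t1.2 ≤ fW w t1.2 y1)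
    (hy1s : fW w t1.2 y1 ≤ (n:ℤ) ∨ firstBit y1 = true) (hy1u : ℓ < fW w t1.2 y1) :
    (1 - 1/(n:ℝ))^(d+1)
      ≤ raceProb (transEA w) (OptPos (n:=n)) (EventIIIEA w) t1 := by
  classical
  have hn : 0 < n := by omega
  have hP0 : ∀ t' u : TLState n, 0 ≤ transEA w t' u :=
    fun t' u => tlTrans_nonneg mutEA w t' u (fun y => mutEA_nonneg hn _ _)
  have hP1 : ∀ t' : TLState n, ∑ u : TLState n, transEA w t' u = 1 :=
    fun t' => sum_tlTrans mutEA w t' (sum_mutEA hn _)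
  set rp : TLState n → ℝ := raceProb (transEA w) (OptPos (n:=n)) (EventIIIEA w) with hrp
  have hrpn : ∀ t' : TLState n, 0 ≤ rp t' :=
    fun t' => raceProb_nonneg _ _ _ hP0 hP1 t'
  have hℓlt : ℓ < (n:ℤ) + w := by omega
  have hA1 : ¬ OptPos t1 := by
    intro hA
    have := fW_optPos hn w t1 hA
    omega
  have hB1 : ¬ EventIIIEA w t1 := fun hB => B_not_safe hn w hw t1 hB ht1Safe
  have hrec := raceProb_rec hn w (OptPos (n:=n)) (EventIIIEA w) t1 hA1 hB1
  set v : BitStr n := t1.2 with hv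
  set PU : BitStr n → Prop := fun y => (fW w t1.1 t1.2 ≤ fW w v y)
    ∧ (fW w v y ≤ (n:ℤ) ∨ firstBit y = true) ∧ ℓ < fW w v y with hPUdef
  set PR : BitStr n → Prop := fun y => (fW w t1.1 t1.2 ≤ fW w v y)
    ∧ ¬ (fW w v y ≤ (n:ℤ) ∨ firstBit y = true) with hPRdef
  have hdisj : ∀ y, PU y → PR y → False := by
    intro y h1 h2
    exact h2.2 h1.2.1
  set U : ℝ := ∑ y : BitStr n, (if PU y then mutEA v y else 0) with hUdef
  set R : ℝ := ∑ y : BitStr n, (if PR y then mutEA v y else 0) with hRdef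
  set Wm : ℝ := ∑ y : BitStr n, (if PU y ∨ PR y then 0 else mutEA v y) with hWdef
  have hURW : U + R + Wm = 1 := by
    rw [hUdef, hRdef, hWdef, ← Finset.sum_add_distrib, ← Finset.sum_add_distrib,
      ← sum_mutEA hn v]
    apply Finset.sum_congr rfl
    intro y _
    by_cases h1 : PU y
    · have h2 : ¬ PR y := fun h2 => hdisj y h1 h2
      rw [if_pos h1, if_neg h2, if_pos (Or.inl h1)]
      ring
    · by_cases h2 : PR y
      · rw [if_neg h1, if_pos h2, if_pos (Or.inr h2)]
        ring
      · rw [if_neg h1, if_neg h2, if_neg (by tauto : ¬ (PU y ∨ PR y))]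
        ring
  set gd : ℝ := (1 - 1/(n:ℝ))^d with hgd
  have hgd0 : 0 ≤ gd := pow_nonneg (one_sub_nonneg' hn) d
  -- pointwise lower bound
  have hLB : ∀ y : BitStr n,
      gd * (if PU y then mutEA v y else 0) + rp t1 * (if PU y ∨ PR y then 0 else mutEA v y)
      ≤ mutEA v y * (if fW w t1.1 t1.2 ≤ fW w v y then rp (v, y) else rp t1) := by
    intro y
    by_cases h1 : PU y
    · have h2 : PU y ∨ PR y := Or.inl h1
      rw [if_pos h1, if_pos h2, mul_zero, add_zero, if_pos h1.1]
      have hihy : gd ≤ rp (v, y) := by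
        have h6 := h1.2.2
        apply ih (v, y) h1.2.1
        show (n:ℤ) + w - fW w v y ≤ d
        omega
      calc gd * mutEA v y = mutEA v y * gd := mul_comm _ _
        _ ≤ mutEA v y * rp (v, y) :=
          mul_le_mul_of_nonneg_left hihy (mutEA_nonneg hn _ _)
    · by_cases h2 : PR y
      · rw [if_neg h1, if_pos (Or.inr h2), mul_zero, mul_zero, add_zero]
        by_cases h3 : fW w t1.1 t1.2 ≤ fW w v y
        · rw [if_pos h3]; exact mul_nonneg (mutEA_nonneg hn _ _) (hrpn _)
        · rw [if_neg h3]; exact mul_nonneg (mutEA_nonneg hn _ _) (hrpn _)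
      · rw [if_neg h1, if_neg (by tauto : ¬ (PU y ∨ PR y)), mul_zero, zero_add]
        by_cases h3 : fW w t1.1 t1.2 ≤ fW w v y
        · rw [if_pos h3]
          have hSafeD : fW w v y ≤ (n:ℤ) ∨ firstBit y = true := by
            by_contra hcon
            exact h2 ⟨h3, hcon⟩
          have hFeq : fW w v y = ℓ := by
            have h4 : ¬ ℓ < fW w v y := by
              intro h5
              exact h1 ⟨h3, hSafeD, h5⟩
            rw [ht1F] at h3
            omega
          have hmem : rp t1 ≤ rp (v, y) := ht1min (v, y) ⟨hSafeD, hFeq⟩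
          calc rp t1 * mutEA v y = mutEA v y * rp t1 := mul_comm _ _
            _ ≤ mutEA v y * rp (v, y) :=
              mul_le_mul_of_nonneg_left hmem (mutEA_nonneg hn _ _)
        · rw [if_neg h3]
          exact le_of_eq (mul_comm _ _)
  have hsumLB : gd * U + rp t1 * Wm ≤ rp t1 := by
    have h7 : rp t1 = ∑ y : BitStr n, mutEA v y *
        (if fW w t1.1 t1.2 ≤ fW w v y then rp (v, y) else rp t1) := hrec
    rw [hUdef, hWdef, Finset.mul_sum, Finset.mul_sum, ← Finset.sum_add_distrib]
    conv_rhs => rw [h7]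
    exact Finset.sum_le_sum fun y _ => hLB y
  -- injection: U ≥ (n-1) * R
  set i0 : Fin n := ⟨0, hn⟩ with hi0
  set Φ : BitStr n → BitStr n := fun y => Function.update y i0 true with hΦ
  have hRprop : ∀ y : BitStr n, PR y →
      firstBit y = false ∧ firstBit v = true ∧ y i0 = false ∧ v i0 = true := by
    intro y hy
    obtain ⟨hacc, hns⟩ := hy
    push_neg at hns
    obtain ⟨hgt, hfb⟩ := hns
    have hyf : firstBit y = false := by
      cases hyy : firstBit y
      · rfl
      · exact absurd hyy hfb
    have hvf : firstBit v = true := by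
      cases hvv : firstBit v
      · exfalso
        have : fW w v y = (ones y : ℤ) := fW_false y hvv
        have h5 : (ones y : ℤ) ≤ n := by exact_mod_cast ones_le y
        omega
      · rfl
    refine ⟨hyf, hvf, ?_, ?_⟩
    · rw [firstBit_eq y hn] at hyf; exact hyf
    · rw [firstBit_eq v hn] at hvf; exact hvf
  have hPUΦ : ∀ y : BitStr n, PR y → PU (Φ y) := by
    intro y hy
    obtain ⟨hyf, hvf, hyi, hvi⟩ := hRprop y hy
    have hones : ones (Φ y) = ones y + 1 := ones_update y i0 hyi
    have hfWΦ : fW w v (Φ y) = fW w v y + 1 := by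
      unfold fW
      rw [hones]
      push_cast
      ring
    have hacc := hy.1
    refine ⟨by omega, Or.inr ?_, by rw [ht1F] at hacc; omega⟩
    rw [firstBit_eq _ hn, hΦ]
    simp [hi0, Function.update_self]
  have hUR : ((n:ℝ) - 1) * R ≤ U := by
    have hinj : ∀ y ∈ Finset.univ.filter PR, ∀ y' ∈ Finset.univ.filter PR,
        Φ y = Φ y' → y = y' := by
      intro y hy y' hy' heq
      rw [Finset.mem_filter] at hy hy'
      obtain ⟨hy1, hy2, hy3, hy4⟩ := hRprop y hy.2
      obtain ⟨hy1', hy2', hy3', hy4'⟩ := hRprop y' hy'.2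
      funext i
      by_cases hi : i = i0
      · subst hi; rw [hy3, hy3']
      · have h8 := congrFun heq i
        simp only [hΦ] at h8
        rwa [Function.update_of_ne hi, Function.update_of_ne hi] at h8
    have hR' : R = ∑ y ∈ Finset.univ.filter PR, mutEA v y := by
      rw [hRdef]; exact (Finset.sum_filter _ _).symm
    have hU' : U = ∑ y ∈ Finset.univ.filter PU, mutEA v y := by
      rw [hUdef]; exact (Finset.sum_filter _ _).symm
    have hstep2 : ∀ y ∈ Finset.univ.filter PR,
        ((n:ℝ) - 1) * mutEA v y = mutEA v (Φ y) := by
      intro y hy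
      rw [Finset.mem_filter] at hy
      obtain ⟨hyf, hvf, hyi, hvi⟩ := hRprop y hy.2
      exact (mutEA_flip hn v y (Φ y) (hamming_update v y i0 hvi hyi)).symm
    have hstep3 : ∑ y ∈ Finset.univ.filter PR, mutEA v (Φ y)
        = ∑ z ∈ (Finset.univ.filter PR).image Φ, mutEA v z :=
      (Finset.sum_image hinj).symm
    have hsub : (Finset.univ.filter PR).image Φ ⊆ Finset.univ.filter PU := by
      intro z hz
      rw [Finset.mem_image] at hz
      obtain ⟨y, hy, rfl⟩ := hz
      rw [Finset.mem_filter] at hy ⊢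
      exact ⟨Finset.mem_univ _, hPUΦ y hy.2⟩
    have hstep4 : ∑ z ∈ (Finset.univ.filter PR).image Φ, mutEA v z
        ≤ ∑ z ∈ Finset.univ.filter PU, mutEA v z :=
      Finset.sum_le_sum_of_subset_of_nonneg hsub
        (fun z _ _ => mutEA_nonneg hn _ _)
    calc ((n:ℝ) - 1) * R = ∑ y ∈ Finset.univ.filter PR, ((n:ℝ) - 1) * mutEA v y := by
          rw [hR', Finset.mul_sum]
      _ = ∑ y ∈ Finset.univ.filter PR, mutEA v (Φ y) := Finset.sum_congr rfl hstep2
      _ = ∑ z ∈ (Finset.univ.filter PR).image Φ, mutEA v z := hstep3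
      _ ≤ ∑ z ∈ Finset.univ.filter PU, mutEA v z := hstep4
      _ = U := hU'.symm
  have hUpos : 0 < U := by
    have h1 : PU y1 := ⟨hy1a, hy1s, hy1u⟩
    have h2 : mutEA v y1 ≤ U := by
      rw [hUdef]
      refine le_trans (le_of_eq (if_pos h1).symm) (Finset.single_le_sum
        (f := fun y : BitStr n => if PU y then mutEA v y else 0)
        (fun y _ => by
          by_cases h : PU y
          · exact le_of_le_of_eq (mutEA_nonneg hn v y) (if_pos h).symm
          · exact le_of_eq (if_neg h).symm)
        (Finset.mem_univ y1))
    exact lt_of_lt_of_le (mutEA_pos hn2 v y1) h2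
  have hR0 : 0 ≤ R := by
    rw [hRdef]
    apply Finset.sum_nonneg
    intro y _
    by_cases h : PR y
    · exact le_of_le_of_eq (mutEA_nonneg hn v y) (if_pos h).symm
    · exact le_of_eq (if_neg h).symm
  have hURpos : 0 < U + R := by linarith
  -- final algebra
  have hWm : Wm = 1 - U - R := by linarith
  have hkey : gd * U ≤ rp t1 * (U + R) := by
    rw [hWm] at hsumLB
    have hexp : rp t1 * (1 - U - R) = rp t1 - rp t1 * U - rp t1 * R := by ring
    have hexp2 : rp t1 * (U + R) = rp t1 * U + rp t1 * R := by ring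
    rw [hexp] at hsumLB
    linarith
  have hfrac : (1 - 1/(n:ℝ)) * (U + R) ≤ U := by
    have hnR : (0:ℝ) < n := by exact_mod_cast hn
    have h1 : (1 - 1/(n:ℝ)) = ((n:ℝ) - 1) / n := by field_simp
    rw [h1, div_mul_eq_mul_div, div_le_iff₀ hnR]
    nlinarith [hUR, hUpos, hR0, hnR]
  have hfin : gd * (1 - 1/(n:ℝ)) * (U + R) ≤ rp t1 * (U + R) := by
    calc gd * (1 - 1/(n:ℝ)) * (U + R) = gd * ((1 - 1/(n:ℝ)) * (U + R)) := by ring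
      _ ≤ gd * U := mul_le_mul_of_nonneg_left hfrac hgd0
      _ ≤ rp t1 * (U + R) := hkey
  calc (1 - 1/(n:ℝ))^(d+1) = gd * (1 - 1/(n:ℝ)) := by rw [hgd]; ring
    _ ≤ rp t1 := le_of_mul_le_mul_right hfin hURpos

set_option maxHeartbeats 1000000 in
lemma race_main (hn2 : 2 ≤ n) (w : ℤ) (hw : 2 ≤ w) :
    ∀ d : ℕ, ∀ t : TLState n,
      (fW w t.1 t.2 ≤ (n:ℤ) ∨ firstBit t.2 = true) →
      ((n:ℤ) + w - fW w t.1 t.2 ≤ d) →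
      (1 - 1/(n:ℝ))^d ≤ raceProb (transEA w) (OptPos (n:=n)) (EventIIIEA w) t := by
  have hn : 0 < n := by omega
  have hbase0 : (0:ℝ) ≤ 1 - 1/(n:ℝ) := one_sub_nonneg' hn
  have hbase1 : 1 - 1/(n:ℝ) ≤ 1 := by linarith [one_div_nonneg' hn]
  intro d
  induction d with
  | zero =>
    intro t hSafe hF
    have hopt : OptPos t := optPos_of_F hn w hw t (by omega)
    rw [raceProb_of_A (transEA w) (OptPos (n:=n)) (EventIIIEA w) t hopt, pow_zero]
  | succ d ih =>
    intro t hSafe hF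
    by_cases hd : (n:ℤ) + w - fW w t.1 t.2 ≤ (d:ℤ)
    · exact le_trans (pow_le_pow_of_le_one hbase0 hbase1 (Nat.le_succ d)) (ih t hSafe hd)
    · have hℓt : fW w t.1 t.2 = (n:ℤ) + w - ((d:ℤ)+1) := by push_cast at hF; omega
      set ℓ : ℤ := (n:ℤ) + w - ((d:ℤ)+1) with hℓdef
      have hℓlt : ℓ < (n:ℤ) + w := by omega
      set S := Finset.univ.filter (fun t' : TLState n =>
        (fW w t'.1 t'.2 ≤ (n:ℤ) ∨ firstBit t'.2 = true) ∧ fW w t'.1 t'.2 = ℓ) with hS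
      have htS : t ∈ S := by
        rw [hS]
        simp only [Finset.mem_filter, Finset.mem_univ, true_and]
        exact ⟨hSafe, hℓt⟩
      obtain ⟨t0, ht0S, ht0min⟩ := Finset.exists_min_image S
        (raceProb (transEA w) (OptPos (n:=n)) (EventIIIEA w)) ⟨t, htS⟩
      have ht0S' := ht0S
      rw [hS, Finset.mem_filter] at ht0S'
      obtain ⟨-, ht0Safe, ht0F⟩ := ht0S'
      have hminP : ∀ t' : TLState n,
          ((fW w t'.1 t'.2 ≤ (n:ℤ) ∨ firstBit t'.2 = true) ∧ fW w t'.1 t'.2 = ℓ) →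
          raceProb (transEA w) (OptPos (n:=n)) (EventIIIEA w) t0
            ≤ raceProb (transEA w) (OptPos (n:=n)) (EventIIIEA w) t' := by
        intro t' ht'
        apply ht0min
        rw [hS]
        simp only [Finset.mem_filter, Finset.mem_univ, true_and]
        exact ht'
      suffices hsuf : (1 - 1/(n:ℝ))^(d+1)
          ≤ raceProb (transEA w) (OptPos (n:=n)) (EventIIIEA w) t0 from
        le_trans hsuf (ht0min t htS)
      by_cases hv : firstBit t0.2 = true
      · apply race_step hn2 w hw d ℓ hℓdef ih t0 ht0Safe ht0F hminP (allOnes n)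
        · rw [fW_allOnes, hv, if_pos rfl, ht0F]
          omega
        · exact Or.inr (firstBit_allOnes hn)
        · rw [fW_allOnes, hv, if_pos rfl]
          omega
      · have hvf : firstBit t0.2 = false := by
          cases h' : firstBit t0.2
          · rfl
          · exact absurd h' hv
        have hF0n : fW w t0.1 t0.2 ≤ (n:ℤ) := by
          rcases ht0Safe with h' | h'
          · exact h'
          · rw [hvf] at h'; cases h'
        by_cases hl : ℓ < (n:ℤ)
        · apply race_step hn2 w hw d ℓ hℓdef ih t0 ht0Safe ht0F hminP (allOnes n)
          · rw [fW_allOnes, hvf]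
            simp only [Bool.false_eq_true, if_false, add_zero]
            rw [ht0F]
            omega
          · exact Or.inr (firstBit_allOnes hn)
          · rw [fW_allOnes, hvf]
            simp only [Bool.false_eq_true, if_false, add_zero]
            omega
        · have hln : ℓ = (n:ℤ) := by omega
          have hu1 : firstBit t0.1 = true := by
            cases h' : firstBit t0.1
            · exfalso
              have hfW : fW w t0.1 t0.2 = (ones t0.2 : ℤ) := fW_false _ h'
              have ho : ones t0.2 = n := by omega
              have h10 := eq_allOnes_of_ones t0.2 ho
              rw [h10, firstBit_allOnes hn] at hvf
              cases hvf
            · rfl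
          set t1 : TLState n := (t0.2, allOnes n) with ht1def
          have hacc_iff : ∀ y : BitStr n,
              (fW w t0.1 t0.2 ≤ fW w t0.2 y) ↔ y = allOnes n := by
            intro y
            rw [ht0F, hln, fW_false y hvf]
            constructor
            · intro h
              apply eq_allOnes_of_ones
              have := ones_le y
              omega
            · rintro rfl
              rw [ones_allOnes]
          have hA0 : ¬ OptPos t0 := by
            intro hA
            have := fW_optPos hn w t0 hA
            omega
          have hB0 : ¬ EventIIIEA w t0 := fun hB => B_not_safe hn w hw t0 hB ht0Safe
          have hrec := raceProb_rec hn w (OptPos (n:=n)) (EventIIIEA w) t0 hA0 hB0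
          have ha : 0 < mutEA t0.2 (allOnes n) := mutEA_pos hn2 _ _
          have heq : raceProb (transEA w) (OptPos (n:=n)) (EventIIIEA w) t0
              = raceProb (transEA w) (OptPos (n:=n)) (EventIIIEA w) t1 := by
            have hs1 : ∀ y : BitStr n, mutEA t0.2 y *
                (if fW w t0.1 t0.2 ≤ fW w t0.2 y
                  then raceProb (transEA w) (OptPos (n:=n)) (EventIIIEA w) (t0.2, y)
                  else raceProb (transEA w) (OptPos (n:=n)) (EventIIIEA w) t0)
                = mutEA t0.2 y * raceProb (transEA w) (OptPos (n:=n)) (EventIIIEA w) t0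
                  + (if y = allOnes n then mutEA t0.2 y *
                      (raceProb (transEA w) (OptPos (n:=n)) (EventIIIEA w) t1
                        - raceProb (transEA w) (OptPos (n:=n)) (EventIIIEA w) t0) else 0) := by
              intro y
              by_cases hy : y = allOnes n
              · subst hy
                rw [if_pos ((hacc_iff _).2 rfl), if_pos rfl, ht1def]
                ring
              · rw [if_neg (fun hc => hy ((hacc_iff y).1 hc)), if_neg hy, add_zero]
            rw [Finset.sum_congr rfl (fun y _ => hs1 y), Finset.sum_add_distrib,
              ← Finset.sum_mul, sum_mutEA hn t0.2, one_mul,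
              Finset.sum_ite_eq' Finset.univ (allOnes n)
                (fun y => mutEA t0.2 y *
                  (raceProb (transEA w) (OptPos (n:=n)) (EventIIIEA w) t1
                    - raceProb (transEA w) (OptPos (n:=n)) (EventIIIEA w) t0))] at hrec
            simp only [Finset.mem_univ, if_pos] at hrec
            have h9 : mutEA t0.2 (allOnes n) *
                (raceProb (transEA w) (OptPos (n:=n)) (EventIIIEA w) t1
                  - raceProb (transEA w) (OptPos (n:=n)) (EventIIIEA w) t0) = 0 := by
              linarith
            rcases mul_eq_zero.1 h9 with h10 | h10
            · exact absurd h10 (ne_of_gt ha)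
            · linarith
          have ht1Safe : fW w t1.1 t1.2 ≤ (n:ℤ) ∨ firstBit t1.2 = true :=
            Or.inr (firstBit_allOnes hn)
          have ht1F : fW w t1.1 t1.2 = ℓ := by
            show fW w t0.2 (allOnes n) = ℓ
            rw [fW_allOnes, hvf]
            simp only [Bool.false_eq_true, if_false, add_zero]
            omega
          have ht1min : ∀ t' : TLState n,
              ((fW w t'.1 t'.2 ≤ (n:ℤ) ∨ firstBit t'.2 = true) ∧ fW w t'.1 t'.2 = ℓ) →
              raceProb (transEA w) (OptPos (n:=n)) (EventIIIEA w) t1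
                ≤ raceProb (transEA w) (OptPos (n:=n)) (EventIIIEA w) t' := by
            intro t' ht'
            rw [← heq]
            exact hminP t' ht'
          rw [heq]
          apply race_step hn2 w hw d ℓ hℓdef ih t1 ht1Safe ht1F ht1min (allOnes n)
          · rw [ht1F]
            show ℓ ≤ fW w (allOnes n) (allOnes n)
            rw [fW_allOnes, firstBit_allOnes hn, if_pos rfl]
            omega
          · exact Or.inr (firstBit_allOnes hn)
          · show ℓ < fW w (allOnes n) (allOnes n)
            rw [fW_allOnes, firstBit_allOnes hn, if_pos rfl]
            omega

lemma exp_neg_one_le (hn2 : 2 ≤ n) : Real.exp (-1) ≤ (1 - 1/(n:ℝ))^(n-1) := by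
  have hnR : (2:ℝ) ≤ n := by exact_mod_cast hn2
  have hn1 : (0:ℝ) < (n:ℝ) - 1 := by linarith
  set c : ℝ := 1/((n:ℝ)-1) with hc
  have hc0 : 0 < c := by positivity
  have hexpc : 1 + c ≤ Real.exp c := by
    have := Real.add_one_le_exp c
    linarith
  have h1 : Real.exp (-c) ≤ 1 - 1/(n:ℝ) := by
    rw [Real.exp_neg]
    have h2 : (1:ℝ) + c = (n:ℝ)/((n:ℝ)-1) := by
      rw [hc]
      field_simp
      ring
    have h3 : (0:ℝ) < 1 + c := by linarith
    have h4 : (Real.exp c)⁻¹ ≤ (1+c)⁻¹ := by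
      apply inv_anti₀ h3 hexpc
    apply le_trans h4
    rw [h2]
    rw [inv_div]
    rw [div_le_iff₀ (by linarith : (0:ℝ) < n)]
    have : (1 - 1/(n:ℝ)) * n = n - 1 := by field_simp
    rw [this]
  have hcast : ((n-1 : ℕ) : ℝ) = (n:ℝ) - 1 := by
    have : 1 ≤ n := by omega
    push_cast [Nat.cast_sub this]
    ring
  calc Real.exp (-1) = (Real.exp (-c))^(n-1) := by
        rw [← Real.exp_nat_mul]
        congr 1
        rw [hcast, hc]
        field_simp
      _ ≤ (1 - 1/(n:ℝ))^(n-1) :=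
        pow_le_pow_left₀ (le_of_lt (Real.exp_pos _)) h1 _

lemma part_iii_race (hn : 0 < n) (w : ℤ) (hw : 2 ≤ w) (s : TLState n)
    (h1 : firstBit s.1 = true) (h2 : firstBit s.2 = false)
    (b : ℝ) (hb0 : 0 < b) (hb1 : b < 1) (hones : b * n ≤ (ones s.2 : ℝ))
    (hk : ¬ ((n : ℤ) - w + 1 ≤ (onesTail s.2 : ℤ))) :
    raceProb (transEA w) (OptPos (n := n)) (EventIIIEA w) s ≥
      (1 - 1 / (n : ℝ)) * Real.exp (-(1 - b) * eu - 1) := by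
  have hkt : ones s.2 = onesTail s.2 := ones_eq_onesTail s.2 hn h2
  have hone1 : 1 ≤ ones s.2 := by
    by_contra hcon
    push_neg at hcon
    have h0 : ones s.2 = 0 := by omega
    rw [h0] at hones
    simp only [Nat.cast_zero] at hones
    have hnpos : (0:ℝ) < n := by exact_mod_cast hn
    nlinarith
  have hkn : (ones s.2 : ℤ) + w ≤ n := by
    push_neg at hk
    omega
  have hn2 : 2 ≤ n := by omega
  have hSafe : fW w s.1 s.2 ≤ (n:ℤ) ∨ firstBit s.2 = true := by
    left
    rw [fW_true s.2 h1]
    omega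
  have honesle : ones s.2 ≤ n := ones_le s.2
  have hd : (n:ℤ) + w - fW w s.1 s.2 ≤ ((n - ones s.2 : ℕ) : ℤ) := by
    rw [fW_true s.2 h1]
    push_cast [Nat.cast_sub honesle]
    omega
  have hmain := race_main hn2 w hw (n - ones s.2) s hSafe hd
  have hchain : (1 - 1 / (n : ℝ)) * Real.exp (-(1 - b) * eu - 1)
      ≤ (1 - 1/(n:ℝ))^(n - ones s.2) := by
    have hb0' : (0:ℝ) ≤ 1 - 1/(n:ℝ) := one_sub_nonneg' hn
    have hb1' : 1 - 1/(n:ℝ) ≤ 1 := by linarith [one_div_nonneg' hn]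
    have hmono : (1 - 1/(n:ℝ))^(n-1) ≤ (1 - 1/(n:ℝ))^(n - ones s.2) := by
      apply pow_le_pow_of_le_one hb0' hb1'
      omega
    have heu0 : (0:ℝ) < eu := Real.exp_pos 1
    have hexp1 : Real.exp (-(1 - b) * eu - 1) ≤ Real.exp (-1) := by
      apply Real.exp_le_exp.2
      nlinarith
    calc (1 - 1 / (n : ℝ)) * Real.exp (-(1 - b) * eu - 1)
        ≤ 1 * Real.exp (-1) := by
          apply mul_le_mul hb1' hexp1 (le_of_lt (Real.exp_pos _)) (by norm_num)
      _ = Real.exp (-1) := one_mul _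
      _ ≤ (1 - 1/(n:ℝ))^(n-1) := exp_neg_one_le hn2
      _ ≤ (1 - 1/(n:ℝ))^(n - ones s.2) := hmono
  exact le_trans hchain hmain

end TL2

/-- Let `b ∈ (0, 1/2)` and `w ≥ 2`, and consider a starting
state `(x', x)` with first bit pattern `(1, 0)` and `|x| ≥ b·n`; set
`k = |x_{[2..n]}|`. Then (i) for the time-linkage RLS on `f_w`, Event III holds
at the start and the RLS never reaches the global optimum; (ii) for the
time-linkage (1+1) EA, if `k ≥ n - w + 1` then Event III holds at the start
and the EA never reaches the global optimum; (iii) otherwise the EA reaches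
the global optimum before Event III happens with probability at least
`(1 - 1/n)·e^{-(1-b)e-1}`, and the expected number of generations until the EA
reaches the global optimum is at least `(w/((1-b)e))^w`. -/
theorem stmt17 (n : ℕ) (hn : 1 ≤ n) (b : ℝ) (hb : b ∈ Set.Ioo (0 : ℝ) (1 / 2))
    (w : ℤ) (hw : 2 ≤ w) (s : TLState n)
    (h1 : firstBit s.1 = true) (h2 : firstBit s.2 = false)
    (hones : b * n ≤ (ones s.2 : ℝ)) :
    (EventIIIRLS s ∧ hitProb (transRLS w) (OptPos (n := n)) s = 0) ∧
    ((n : ℤ) - w + 1 ≤ (onesTail s.2 : ℤ) →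
      EventIIIEA w s ∧ hitProb (transEA w) (OptPos (n := n)) s = 0) ∧
    (¬ ((n : ℤ) - w + 1 ≤ (onesTail s.2 : ℤ)) →
      raceProb (transEA w) (OptPos (n := n)) (EventIIIEA w) s ≥
        (1 - 1 / (n : ℝ)) * Real.exp (-(1 - b) * eu - 1) ∧
      ENNReal.ofReal (((w : ℝ) / ((1 - b) * eu)) ^ w) ≤
        expHitTime (transEA w) (OptPos (n := n)) s) := by
  have hn0 : 0 < n := hn
  obtain ⟨hb0, hbh⟩ := hb
  have hb1 : b < 1 := by linarith
  refine ⟨⟨⟨h1, h2⟩, TL2.part_i hn0 w hw s h1 h2⟩, ?_, ?_⟩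
  · intro hk
    exact ⟨⟨h1, h2, hk⟩, TL2.part_ii hn0 w hw s h1 h2 hk⟩
  · intro hk
    have hkt : ones s.2 = onesTail s.2 := TL.ones_eq_onesTail s.2 hn0 h2
    have hone1 : 1 ≤ ones s.2 := by
      by_contra hcon
      push_neg at hcon
      have h0 : ones s.2 = 0 := by omega
      rw [h0] at hones
      simp only [Nat.cast_zero] at hones
      have hnpos : (0:ℝ) < n := by exact_mod_cast hn0
      nlinarith
    have hn2 : 2 ≤ n := by
      push_neg at hk
      omega
    exact ⟨TL2.part_iii_race hn0 w hw s h1 h2 b hb0 hb1 hones hk,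
      TL2.part_iii_exp hn2 w hw s h1 h2 b hb0 hb1 hones⟩
end
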